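/- arXiv:2009.06729 — 7 statements merged into one kernel-verified Lean document; each statement's English description precedes it below -/
import Mathlib

section
/- Let W be a locally convex topological vector space over ℝ and V ⊆ W a dense linear subspace. Then every convex function p : V → ℝ that is continuous in the subspace topology of V extends to a continuous function q : W → ℝ with q|_V = p. -/
open Topology Pointwise

set_option maxHeartbeats 1600000


/-- Lemma 5.3: a continuous convex real function on a dense subspace of a locally convex
real topological vector space extends to a continuous function on the whole space. -/
theorem stmt3 {W : Type*} [AddCommGroup W] [Module ℝ W] [TopologicalSpace W]
    [IsTopologicalAddGroup W] [ContinuousSMul ℝ W] [LocallyConvexSpace ℝ W]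
    (V : Submodule ℝ W) (hV : Dense (V : Set W))
    (p : V → ℝ) (hp : ConvexOn ℝ (Set.univ : Set V) p) (hpc : Continuous p) :
    ∃ q : W → ℝ, Continuous q ∧ ∀ v : V, q v = p v := by
  classical
  have di : IsDenseInducing ((↑) : V → W) := hV.isDenseEmbedding_val.toIsDenseInducing
  suffices h : ∀ b : W, ∃ c, Filter.Tendsto p (Filter.comap (↑) (𝓝 b)) (𝓝 c) by
    exact ⟨di.extend p, di.continuous_extend h, fun v => di.extend_eq hpc v⟩
  -- Step 0: from continuity of `p` at `0`, find a set `T ∈ 𝓝 (0 : W)` on which the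
  -- oscillation of `p` (over points of V) around `p 0` is at most 1.
  have hcont : {v : V | |p v - p 0| ≤ 1} ∈ 𝓝 (0 : V) := by
    have : Filter.Tendsto p (𝓝 (0 : V)) (𝓝 (p 0)) := hpc.continuousAt
    have h1 : Metric.closedBall (p 0) 1 ∈ 𝓝 (p 0) := Metric.closedBall_mem_nhds _ one_pos
    filter_upwards [this h1] with v hv
    simpa [Metric.mem_closedBall, Real.dist_eq] using hv
  rw [nhds_subtype_eq_comap, Filter.mem_comap] at hcont
  obtain ⟨T, hT, hTsub⟩ := hcont
  -- Step 1: build a convex, open, symmetric neighborhood `U ⊆ T` of `0`.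
  obtain ⟨S, ⟨hS_nhds, hS_conv⟩, hST⟩ :=
    ((LocallyConvexSpace.convex_basis (𝕜 := ℝ) (0 : W)).mem_iff).1 hT
  set U : Set W := interior S ∩ -interior S with hUdef
  have hS_int : (0 : W) ∈ interior S := mem_interior_iff_mem_nhds.2 hS_nhds
  have hU0 : (0 : W) ∈ U := ⟨hS_int, by simpa using hS_int⟩
  have hUo : IsOpen U := isOpen_interior.inter isOpen_interior.neg
  have hUc : Convex ℝ U := hS_conv.interior.inter hS_conv.interior.neg
  have hUsym : ∀ x ∈ U, -x ∈ U := by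
    rintro x ⟨h1, h2⟩
    exact ⟨by simpa [Set.mem_neg] using h2, by simpa [Set.mem_neg] using h1⟩
  have hUT : U ⊆ T := fun x hx => hST (interior_subset hx.1)
  have hUabs : Absorbent ℝ U := absorbent_nhds_zero (hUo.mem_nhds hU0)
  -- the gauge of U
  set N : W → ℝ := gauge U with hNdef
  have Nadd : ∀ x y : W, N (x + y) ≤ N x + N y := gauge_add_le hUc hUabs
  have Nsmul : ∀ (a : ℝ) (x : W), 0 ≤ a → N (a • x) = a * N x := fun a x ha => by
    simpa [smul_eq_mul] using gauge_smul_of_nonneg ha x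
  have Nneg : ∀ x : W, N (-x) = N x := gauge_neg hUsym
  have Nlt1 : ∀ x : W, N x < 1 → x ∈ U := fun x hx =>
    gauge_lt_one_subset_self hUc hU0 hUabs hx
  have N0 : N (0 : W) = 0 := gauge_zero
  have Nsub : ∀ x y z : W, N (x - z) ≤ N (x - y) + N (y - z) := by
    intro x y z
    have : x - z = (x - y) + (y - z) := by abel
    rw [this]; exact Nadd _ _
  -- `N`-balls are neighborhoods
  have hball : ∀ (w : W) (r : ℝ), 0 < r → {z : W | N (z - w) < r} ∈ 𝓝 w := by
    intro w r hr
    have hsub : {z : W | z - w ∈ (r / 2) • U} ⊆ {z : W | N (z - w) < r} := by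
      intro z hz
      rcases hz with ⟨u, hu, hzu⟩
      have : N (z - w) = (r / 2) * N u := by rw [← hzu]; exact Nsmul _ _ (by linarith)
      rw [Set.mem_setOf_eq, this]
      have h1 : N u ≤ 1 := gauge_le_one_of_mem hu
      nlinarith [gauge_nonneg (s := U) u]
    refine Filter.mem_of_superset ?_ hsub
    have hopen : IsOpen ((r / 2) • U) := hUo.smul₀ (by positivity : (0:ℝ) < r/2).ne'
    have hopen' : IsOpen {z : W | z - w ∈ (r / 2) • U} :=
      hopen.preimage (continuous_id.sub continuous_const)
    refine hopen'.mem_nhds ?_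
    simp only [Set.mem_setOf_eq, sub_self]
    exact ⟨0, hU0, smul_zero _⟩
  -- basic bound from continuity
  have hbound : ∀ v : V, N (v : W) < 1 → |p v - p 0| ≤ 1 := fun v hv =>
    hTsub (hUT (Nlt1 _ hv))
  -- fix the target point
  intro w
  -- pick `v1 ∈ V` with `N (v1 - w) < 1/16`
  have hw : w ∈ closure (V : Set W) := hV w
  obtain ⟨x1, hx1B, hx1V⟩ := _root_.mem_closure_iff_nhds.1 hw _ (hball w (1/16) (by norm_num))
  set v1 : V := ⟨x1, hx1V⟩ with hv1def
  have hv1 : N ((v1 : W) - w) < 1/16 := hx1B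
  -- convexity inequality, convenient form
  have hcx : ∀ (a b : V) (s t : ℝ), 0 ≤ s → 0 ≤ t → s + t = 1 →
      p (s • a + t • b) ≤ s * p a + t * p b := fun a b s t hs ht hst =>
    hp.2 (Set.mem_univ a) (Set.mem_univ b) hs ht hst
  -- Step A: `p` is bounded above on the 1/2-ball around v1
  set M : ℝ := (p 0 + 1 + p ((2:ℝ) • v1)) / 2 with hMdef
  have hA : ∀ x : V, N ((x : W) - (v1 : W)) < 1/2 → p x ≤ M := by
    intro x hx
    set a : V := (2:ℝ) • x - (2:ℝ) • v1 with hadef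
    have hax : ((a : W)) = (2:ℝ) • ((x : W) - (v1 : W)) := by
      push_cast [hadef]; rw [smul_sub]
    have hNa : N (a : W) < 1 := by
      rw [hax, Nsmul _ _ (by norm_num)]; linarith
    have hpa : p a ≤ p 0 + 1 := by
      have := hbound a hNa
      have := abs_le.1 this
      linarith [this.2]
    have hxeq : (1/2 : ℝ) • a + (1/2 : ℝ) • ((2:ℝ) • v1) = x := by
      apply Subtype.ext
      push_cast [hadef]
      module
    have := hcx a ((2:ℝ) • v1) (1/2) (1/2) (by norm_num) (by norm_num) (by norm_num)
    rw [hxeq] at this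
    rw [hMdef]; linarith
  have hC0 : p v1 ≤ M := by
    refine hA v1 ?_
    rw [sub_self, N0]; norm_num
  set C : ℝ := M - p v1 with hCdef
  have hCnn : 0 ≤ C := by rw [hCdef]; linarith
  -- Step B: two-sided bound on the 1/2-ball around v1
  have hB : ∀ x : V, N ((x : W) - (v1 : W)) < 1/2 → |p x - p v1| ≤ C := by
    intro x hx
    have hup : p x - p v1 ≤ C := by have := hA x hx; rw [hCdef]; linarith
    set b : V := (2:ℝ) • v1 - x with hbdef
    have hbx : ((b : W)) - (v1 : W) = -(((x : W)) - (v1 : W)) := by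
      push_cast [hbdef]; module
    have hNb : N ((b : W) - (v1 : W)) < 1/2 := by rw [hbx, Nneg]; exact hx
    have hpb : p b ≤ M := hA b hNb
    have hveq : (1/2 : ℝ) • x + (1/2 : ℝ) • b = v1 := by
      apply Subtype.ext
      push_cast [hbdef]
      module
    have := hcx x b (1/2) (1/2) (by norm_num) (by norm_num) (by norm_num)
    rw [hveq] at this
    have hlow : p v1 - p x ≤ C := by rw [hCdef]; linarith
    exact abs_le.2 ⟨by linarith, by linarith⟩
  -- Step C: Lipschitz-type estimate near v1
  have hLip : ∀ (ε : ℝ), 0 < ε → ε ≤ 1 → ∀ x y : V,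
      N ((x : W) - (v1 : W)) < 1/8 → N ((y : W) - (v1 : W)) < 1/8 →
      N ((y : W) - (x : W)) < ε/8 → p y - p x ≤ 2 * C * ε := by
    intro ε hε hε1 x y hx hy hxy
    set z : V := x + ε⁻¹ • (y - x) with hzdef
    have hzc : ((z : W)) = (x : W) + ε⁻¹ • ((y : W) - (x : W)) := by push_cast [hzdef]; ring_nf
    have hNz : N ((z : W) - (v1 : W)) < 1/2 := by
      have h1 : ((z : W)) - (v1 : W) = ((x : W) - (v1 : W)) + ε⁻¹ • ((y : W) - (x : W)) := by
        rw [hzc]; abel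
      have h2 : N (ε⁻¹ • ((y : W) - (x : W))) = ε⁻¹ * N ((y : W) - (x : W)) :=
        Nsmul _ _ (by positivity)
      have h3 : ε⁻¹ * N ((y : W) - (x : W)) < ε⁻¹ * (ε/8) := by
        apply mul_lt_mul_of_pos_left hxy (by positivity)
      have h4 : ε⁻¹ * (ε/8) = 1/8 := by field_simp
      calc N ((z : W) - (v1 : W)) ≤ N ((x : W) - (v1 : W)) + N (ε⁻¹ • ((y : W) - (x : W))) := by
            rw [h1]; exact Nadd _ _
        _ < 1/8 + 1/8 := by rw [h2]; linarith
        _ ≤ 1/2 := by norm_num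
    have hyeq : (1 - ε) • x + ε • z = y := by
      apply Subtype.ext
      push_cast [hzdef]
      have : ε • (ε⁻¹ • (((y : W)) - (x : W))) = ((y : W)) - (x : W) := by
        rw [smul_smul, mul_inv_cancel₀ hε.ne', one_smul]
      rw [smul_add, this]
      module
    have hconv := hcx x z (1 - ε) ε (by linarith) hε.le (by ring)
    rw [hyeq] at hconv
    have hzb := abs_le.1 (hB z hNz)
    have hxb := abs_le.1 (hB x (by linarith))
    nlinarith [hconv, hzb.1, hzb.2, hxb.1, hxb.2]
  -- Step D: the filter `map p (comap (↑) (𝓝 w))` is Cauchy, hence converges.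
  haveI : (Filter.comap ((↑) : V → W) (𝓝 w)).NeBot := di.comap_nhds_neBot w
  have hcauchy : Cauchy (Filter.map p (Filter.comap ((↑) : V → W) (𝓝 w))) := by
    rw [Metric.cauchy_iff]
    refine ⟨Filter.map_neBot, fun δ hδ => ?_⟩
    set ε : ℝ := min 1 (δ / (4 * C + 4)) with hεdef
    have hεpos : 0 < ε := lt_min one_pos (by positivity)
    have hε1 : ε ≤ 1 := min_le_left _ _
    have hεδ : ε ≤ δ / (4 * C + 4) := min_le_right _ _
    have hεδ' : ε * (4 * C + 4) ≤ δ := by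
      rw [← le_div_iff₀ (by positivity)]; exact hεδ
    have hkey : 2 * C * ε < δ := by nlinarith
    refine ⟨p '' {v : V | N ((v : W) - w) < ε/32}, ?_, ?_⟩
    · apply Filter.image_mem_map
      have : {v : V | N ((v : W) - w) < ε/32} =
          ((↑) : V → W) ⁻¹' {z : W | N (z - w) < ε/32} := rfl
      rw [this]
      exact Filter.preimage_mem_comap (hball w _ (by positivity))
    · rintro _ ⟨x, hx, rfl⟩ _ ⟨y, hy, rfl⟩
      simp only [Set.mem_setOf_eq] at hx hy
      have hwv1 : N (w - (v1 : W)) < 1/16 := by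
        rw [show w - (v1 : W) = -(((v1 : W)) - w) by abel, Nneg]; exact hv1
      have hx1 : N ((x : W) - (v1 : W)) < 1/8 := by
        have := Nsub (x : W) w (v1 : W)
        have hε32 : ε/32 ≤ 1/32 := by linarith
        linarith
      have hy1 : N ((y : W) - (v1 : W)) < 1/8 := by
        have := Nsub (y : W) w (v1 : W)
        have hε32 : ε/32 ≤ 1/32 := by linarith
        linarith
      have hxy : N ((y : W) - (x : W)) < ε/8 := by
        have h1 := Nsub (y : W) w (x : W)
        have h2 : N (w - (x : W)) = N ((x : W) - w) := by
          rw [show w - (x : W) = -(((x : W)) - w) by abel, Nneg]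
        linarith
      have hyx : N ((x : W) - (y : W)) < ε/8 := by
        rw [show (x : W) - (y : W) = -(((y : W)) - (x : W)) by abel, Nneg]; exact hxy
      have h1 := hLip ε hεpos hε1 x y hx1 hy1 hxy
      have h2 := hLip ε hεpos hε1 y x hy1 hx1 hyx
      rw [Real.dist_eq]
      rw [abs_sub_lt_iff]
      constructor <;> linarith
  obtain ⟨c, hc⟩ := CompleteSpace.complete hcauchy
  exact ⟨c, hc⟩
end

section
/- Let (X, μ) be a finite nonatomic measure space and f ∈ L¹(X, μ). Then the function [0, μ(X)] ∋ α ↦ sup{ ∫_E f dμ : E ⊆ X measurable, μ(E) = α } is continuous (taking the value 0 at α = 0). -/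
open MeasureTheory
open scoped ENNReal

/-- A measure is nonatomic if every set of positive measure contains a subset of
strictly smaller positive measure. -/
def Nonatomic {X : Type*} [MeasurableSpace X] (μ : Measure X) : Prop :=
  ∀ s : Set X, MeasurableSet s → 0 < μ s →
    ∃ t, t ⊆ s ∧ MeasurableSet t ∧ 0 < μ t ∧ μ t < μ s

section Aux

variable {X : Type*} [MeasurableSpace X] {μ : Measure X}

lemma half_lemma [IsFiniteMeasure μ] (hμ : Nonatomic μ)
    {s : Set X} (hs : MeasurableSet s) (h0 : 0 < μ s) :
    ∃ t, t ⊆ s ∧ MeasurableSet t ∧ 0 < μ t ∧ μ t ≤ μ s / 2 := by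
  obtain ⟨t, hts, htm, ht0, htlt⟩ := hμ s hs h0
  by_cases hle : μ t ≤ μ s / 2
  · exact ⟨t, hts, htm, ht0, hle⟩
  · push_neg at hle
    have hd : μ (s \ t) = μ s - μ t :=
      measure_diff hts htm.nullMeasurableSet (measure_ne_top μ t)
    refine ⟨s \ t, Set.diff_subset, hs.diff htm, ?_, ?_⟩
    · rw [hd]; exact tsub_pos_of_lt htlt
    · rw [hd, tsub_le_iff_right]
      calc μ s = μ s / 2 + μ s / 2 := (ENNReal.add_halves _).symm
        _ ≤ μ t + μ s / 2 := add_le_add_left hle.le _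
        _ = μ s / 2 + μ t := add_comm _ _

lemma exists_small_subset [IsFiniteMeasure μ] (hμ : Nonatomic μ)
    {s : Set X} (hs : MeasurableSet s) (h0 : 0 < μ s) {ε : ℝ≥0∞} (hε : 0 < ε) :
    ∃ t, t ⊆ s ∧ MeasurableSet t ∧ 0 < μ t ∧ μ t ≤ ε := by
  have iter : ∀ n : ℕ, ∃ t, t ⊆ s ∧ MeasurableSet t ∧ 0 < μ t ∧ μ t ≤ μ s / 2 ^ n := by
    intro n
    induction n with
    | zero => exact ⟨s, subset_rfl, hs, h0, by simp⟩
    | succ n ih =>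
      obtain ⟨t, hts, htm, ht0, hle⟩ := ih
      obtain ⟨t', h1, h2, h3, h4⟩ := half_lemma hμ htm ht0
      refine ⟨t', h1.trans hts, h2, h3, ?_⟩
      calc μ t' ≤ μ t / 2 := h4
        _ ≤ μ s / 2 ^ n / 2 := by gcongr
        _ = μ s / 2 ^ (n + 1) := by
            have hinv : ((2 : ℝ≥0∞) ^ n * 2)⁻¹ = ((2 : ℝ≥0∞) ^ n)⁻¹ * 2⁻¹ :=
              ENNReal.mul_inv (Or.inl (by positivity))
                (Or.inl (ENNReal.pow_ne_top ENNReal.ofNat_ne_top))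
            rw [pow_succ, div_eq_mul_inv (b := (2:ℝ≥0∞) ^ n * 2), hinv, ← mul_assoc,
              ← div_eq_mul_inv, ← div_eq_mul_inv]
  rcases eq_or_ne ε ⊤ with rfl | hεt
  · exact ⟨s, subset_rfl, hs, h0, le_top⟩
  · obtain ⟨n, hn⟩ := ENNReal.exists_nat_gt
      (ENNReal.div_lt_top (measure_ne_top μ s) hε.ne').ne
    have h2n : (μ s) / ε < 2 ^ n := by
      refine hn.trans_le ?_
      have := Nat.lt_two_pow_self (n := n)
      exact_mod_cast Nat.cast_le.mpr this.le
    obtain ⟨t, h1, h2, h3, h4⟩ := iter n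
    refine ⟨t, h1, h2, h3, h4.trans ?_⟩
    rw [ENNReal.div_lt_iff (Or.inl hε.ne') (Or.inl hεt)] at h2n
    rw [ENNReal.div_le_iff_le_mul (Or.inl (by positivity)) (Or.inl (by
      exact ENNReal.pow_ne_top ENNReal.ofNat_ne_top))]
    calc μ s ≤ 2 ^ n * ε := h2n.le
      _ = ε * 2 ^ n := mul_comm _ _

/-- Sierpiński: a nonatomic finite measure attains every value up to `μ s` on subsets of `s`. -/
lemma sierpinski [IsFiniteMeasure μ] (hμ : Nonatomic μ)
    {s : Set X} (hs : MeasurableSet s) {c : ℝ≥0∞} (hc : c ≤ μ s) :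
    ∃ t, t ⊆ s ∧ MeasurableSet t ∧ μ t = c := by
  rcases hc.lt_or_eq with hc | hc
  swap
  · exact ⟨s, subset_rfl, hs, hc.symm⟩
  have key : ∀ t : Set X, MeasurableSet t → μ t ≤ c →
      ∃ u, u ⊆ s \ t ∧ MeasurableSet u ∧ μ t + μ u ≤ c ∧
        ∀ v, v ⊆ s \ t → MeasurableSet v → μ t + μ v ≤ c → μ v ≤ 2 * μ u := by
    intro t htm htc
    set A := {m : ℝ≥0∞ | ∃ v, v ⊆ s \ t ∧ MeasurableSet v ∧ μ t + μ v ≤ c ∧ μ v = m} with hA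
    have hAle : ∀ m ∈ A, m ≤ c := by
      rintro m ⟨v, _, _, hvc, rfl⟩
      exact le_trans le_add_self hvc
    have hsup_le : sSup A ≤ c := sSup_le hAle
    rcases eq_or_ne (sSup A) 0 with h0 | h0
    · refine ⟨∅, by simp, MeasurableSet.empty, by simpa using htc, fun v hv hvm hvc => ?_⟩
      have h1 : μ v ≤ sSup A := le_sSup ⟨v, hv, hvm, hvc, rfl⟩
      rw [h0] at h1
      simpa using h1
    · have hhalf : sSup A / 2 < sSup A :=
        ENNReal.half_lt_self h0 (hsup_le.trans_lt (hc.trans (measure_lt_top μ s))).ne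
      obtain ⟨m, hm, hm2⟩ := lt_sSup_iff.mp hhalf
      obtain ⟨v, hv, hvm, hvc, rfl⟩ := hm
      refine ⟨v, hv, hvm, hvc, fun w hw hwm hwc => ?_⟩
      calc μ w ≤ sSup A := le_sSup ⟨w, hw, hwm, hwc, rfl⟩
        _ = sSup A / 2 + sSup A / 2 := (ENNReal.add_halves _).symm
        _ ≤ μ v + μ v := add_le_add hm2.le hm2.le
        _ = 2 * μ v := (two_mul _).symm
  choose! F hF1 hF2 hF3 hF4 using key
  set T : ℕ → Set X := fun n => Nat.rec ∅ (fun _ t => t ∪ F t) n with hT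
  have hTs : ∀ n, T (n + 1) = T n ∪ F (T n) := fun n => rfl
  have good : ∀ n, T n ⊆ s ∧ MeasurableSet (T n) ∧ μ (T n) ≤ c := by
    intro n
    induction n with
    | zero =>
      have hT0 : T 0 = (∅ : Set X) := rfl
      rw [hT0]
      exact ⟨Set.empty_subset s, MeasurableSet.empty, by simp⟩
    | succ n ih =>
      obtain ⟨h1, h2, h3⟩ := ih
      have hu := hF1 (T n) h2 h3
      have hum := hF2 (T n) h2 h3
      have huc := hF3 (T n) h2 h3
      refine ⟨?_, ?_, ?_⟩
      · rw [hTs]; exact Set.union_subset h1 (hu.trans Set.diff_subset)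
      · rw [hTs]; exact h2.union hum
      · rw [hTs]; exact (measure_union_le _ _).trans huc
  have hmono : Monotone T := monotone_nat_of_le_succ fun n => by
    rw [hTs]; exact Set.subset_union_left
  set t0 := ⋃ n, T n with ht0def
  have ht0m : MeasurableSet t0 := MeasurableSet.iUnion fun n => (good n).2.1
  have ht0s : t0 ⊆ s := Set.iUnion_subset fun n => (good n).1
  have ht0c : μ t0 ≤ c := by
    rw [ht0def, hmono.measure_iUnion]
    exact iSup_le fun n => (good n).2.2
  refine ⟨t0, ht0s, ht0m, le_antisymm ht0c ?_⟩
  by_contra hlt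
  push_neg at hlt
  have hpos : 0 < μ (s \ t0) := by
    rw [measure_diff ht0s ht0m.nullMeasurableSet (measure_ne_top μ _)]
    exact tsub_pos_of_lt (hlt.trans hc)
  obtain ⟨u, hus, hum, hu0, huε⟩ := exists_small_subset hμ (hs.diff ht0m) hpos (tsub_pos_of_lt hlt)
  have hkey : ∀ n, μ u ≤ 2 * μ (F (T n)) := by
    intro n
    obtain ⟨h1, h2, h3⟩ := good n
    refine hF4 (T n) h2 h3 u (hus.trans ?_) hum ?_
    · exact Set.diff_subset_diff_right (Set.subset_iUnion T n)
    · calc μ (T n) + μ u ≤ μ t0 + (c - μ t0) :=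
          add_le_add (measure_mono (Set.subset_iUnion T n)) huε
        _ = c := add_tsub_cancel_of_le hlt.le
  have hdisj : Pairwise (Function.onFun Disjoint fun n => F (T n)) := by
    have hsub : ∀ m n, m < n → F (T m) ⊆ T n := by
      intro m n hmn
      have h1 : F (T m) ⊆ T (m + 1) := by rw [hTs]; exact Set.subset_union_right
      exact h1.trans (hmono hmn)
    have hd : ∀ n, Disjoint (F (T n)) (T n) := fun n =>
      Set.disjoint_of_subset_left (hF1 (T n) (good n).2.1 (good n).2.2) Set.disjoint_sdiff_left
    intro m n hmn
    rcases hmn.lt_or_gt with h | h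
    · exact ((hd n).mono_right (hsub m n h)).symm
    · exact (hd m).mono_right (hsub n m h)
  have hsum : (∑' n, μ (F (T n))) ≠ ⊤ := by
    rw [← measure_iUnion hdisj fun n => hF2 (T n) (good n).2.1 (good n).2.2]
    exact measure_ne_top μ _
  have htends : Filter.Tendsto (fun n => μ (F (T n))) Filter.atTop (nhds 0) :=
    ENNReal.tendsto_atTop_zero_of_tsum_ne_top hsum
  have hhalfpos : (0 : ℝ≥0∞) < μ u / 2 := ENNReal.div_pos hu0.ne' ENNReal.ofNat_ne_top
  obtain ⟨n, hn⟩ := (htends.eventually_lt_const hhalfpos).exists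
  have h1 := hkey n
  have h2 : 2 * μ (F (T n)) < 2 * (μ u / 2) :=
    (ENNReal.mul_lt_mul_iff_right two_ne_zero ENNReal.ofNat_ne_top).mpr hn
  rw [ENNReal.mul_div_cancel two_ne_zero ENNReal.ofNat_ne_top] at h2
  exact absurd (h1.trans_lt h2) (lt_irrefl _)

lemma abscont {f : X → ℝ} (hfi : Integrable f μ) {ε : ℝ} (hε : 0 < ε) :
    ∃ δ : ℝ, 0 < δ ∧ ∀ E : Set X, μ E ≤ ENNReal.ofReal δ → |∫ x in E, f x ∂μ| ≤ ε := by
  obtain ⟨δ', hδ'0, H⟩ := exists_pos_setLIntegral_lt_of_measure_lt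
    (f := fun x => ENNReal.ofReal ‖f x‖) (μ := μ)
    (by simpa only [ofReal_norm] using hfi.hasFiniteIntegral.ne)
    (ε := ENNReal.ofReal ε) (ENNReal.ofReal_pos.mpr hε).ne'
  obtain ⟨δ, hδ0, hδlt⟩ : ∃ δ : ℝ, 0 < δ ∧ ENNReal.ofReal δ < δ' := by
    rcases eq_or_ne δ' ⊤ with rfl | hδ't
    · exact ⟨1, one_pos, by simp [ENNReal.ofReal_lt_top]⟩
    · refine ⟨δ'.toReal / 2, half_pos (ENNReal.toReal_pos hδ'0.ne' hδ't), ?_⟩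
      rw [ENNReal.ofReal_lt_iff_lt_toReal (by positivity) hδ't]
      exact half_lt_self (ENNReal.toReal_pos hδ'0.ne' hδ't)
  refine ⟨δ, hδ0, fun E hE => ?_⟩
  have h1 : ∫⁻ x in E, ENNReal.ofReal ‖f x‖ ∂μ < ENNReal.ofReal ε :=
    H E (hE.trans_lt hδlt)
  calc |∫ x in E, f x ∂μ| ≤ (∫⁻ x in E, ENNReal.ofReal ‖f x‖ ∂μ).toReal :=
        norm_integral_le_lintegral_norm f
    _ ≤ ε := ENNReal.toReal_le_of_le_ofReal hε.le h1.le

lemma bdd_S {f : X → ℝ} (hfi : Integrable f μ) (α : ℝ) :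
    BddAbove {r : ℝ | ∃ E : Set X, MeasurableSet E ∧
      μ E = ENNReal.ofReal α ∧ r = ∫ x in E, f x ∂μ} := by
  refine ⟨∫ x, ‖f x‖ ∂μ, ?_⟩
  rintro r ⟨E, hEm, hEμ, rfl⟩
  calc ∫ x in E, f x ∂μ ≤ |∫ x in E, f x ∂μ| := le_abs_self _
    _ ≤ ∫ x in E, ‖f x‖ ∂μ := norm_integral_le_integral_norm f
    _ ≤ ∫ x, ‖f x‖ ∂μ :=
        setIntegral_le_integral hfi.norm (Filter.Eventually.of_forall fun x => norm_nonneg _)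

lemma nonempty_S [IsFiniteMeasure μ] (hμ : Nonatomic μ) (f : X → ℝ) {α : ℝ}
    (hα : α ≤ (μ Set.univ).toReal) :
    Set.Nonempty {r : ℝ | ∃ E : Set X, MeasurableSet E ∧
      μ E = ENNReal.ofReal α ∧ r = ∫ x in E, f x ∂μ} := by
  obtain ⟨E, _, hEm, hEμ⟩ := sierpinski hμ MeasurableSet.univ
    (ENNReal.ofReal_le_of_le_toReal hα)
  exact ⟨∫ x in E, f x ∂μ, E, hEm, hEμ, rfl⟩

lemma step_est [IsFiniteMeasure μ] (hμ : Nonatomic μ) {f : X → ℝ} (hfi : Integrable f μ)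
    {α β ε : ℝ} (hα : 0 ≤ α) (hab : α ≤ β) (hβ : β ≤ (μ Set.univ).toReal)
    (hE : ∀ E : Set X, MeasurableSet E → μ E ≤ ENNReal.ofReal (β - α) →
      |∫ x in E, f x ∂μ| ≤ ε) :
    |sSup {r : ℝ | ∃ E : Set X, MeasurableSet E ∧
        μ E = ENNReal.ofReal α ∧ r = ∫ x in E, f x ∂μ} -
      sSup {r : ℝ | ∃ E : Set X, MeasurableSet E ∧
        μ E = ENNReal.ofReal β ∧ r = ∫ x in E, f x ∂μ}| ≤ ε := by
  set Sa := {r : ℝ | ∃ E : Set X, MeasurableSet E ∧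
    μ E = ENNReal.ofReal α ∧ r = ∫ x in E, f x ∂μ} with hSa
  set Sb := {r : ℝ | ∃ E : Set X, MeasurableSet E ∧
    μ E = ENNReal.ofReal β ∧ r = ∫ x in E, f x ∂μ} with hSb
  have bddA : BddAbove Sa := bdd_S hfi α
  have bddB : BddAbove Sb := bdd_S hfi β
  have neA : Sa.Nonempty := nonempty_S hμ f (le_trans hab hβ)
  have neB : Sb.Nonempty := nonempty_S hμ f hβ
  have hAB : sSup Sa ≤ sSup Sb + ε := by
    refine csSup_le neA ?_
    rintro r ⟨E, hEm, hEμ, rfl⟩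
    have hcompl : ENNReal.ofReal (β - α) ≤ μ Eᶜ := by
      rw [measure_compl hEm (measure_ne_top μ E), hEμ, ENNReal.ofReal_sub _ hα]
      exact tsub_le_tsub_right (ENNReal.ofReal_le_of_le_toReal hβ) _
    obtain ⟨D, hDsub, hDm, hDμ⟩ := sierpinski hμ hEm.compl hcompl
    have hdisj : Disjoint E D := disjoint_compl_right.mono_right hDsub
    have hunion : μ (E ∪ D) = ENNReal.ofReal β := by
      rw [measure_union hdisj hDm, hEμ, hDμ, ← ENNReal.ofReal_add hα (by linarith)]
      congr 1
      ring
    have hmem : (∫ x in E ∪ D, f x ∂μ) ∈ Sb := ⟨E ∪ D, hEm.union hDm, hunion, rfl⟩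
    have hsplit : ∫ x in E ∪ D, f x ∂μ = ∫ x in E, f x ∂μ + ∫ x in D, f x ∂μ :=
      setIntegral_union hdisj hDm hfi.integrableOn hfi.integrableOn
    have h1 : ∫ x in E ∪ D, f x ∂μ ≤ sSup Sb := le_csSup bddB hmem
    have h2 := abs_le.mp (hE D hDm (le_of_eq hDμ))
    linarith
  have hBA : sSup Sb ≤ sSup Sa + ε := by
    refine csSup_le neB ?_
    rintro r ⟨E, hEm, hEμ, rfl⟩
    have hle : ENNReal.ofReal α ≤ μ E := by
      rw [hEμ]; exact ENNReal.ofReal_le_ofReal hab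
    obtain ⟨D, hDsub, hDm, hDμ⟩ := sierpinski hμ hEm hle
    have hdiff : μ (E \ D) ≤ ENNReal.ofReal (β - α) := by
      rw [measure_diff hDsub hDm.nullMeasurableSet (measure_ne_top μ D), hEμ, hDμ,
        ENNReal.ofReal_sub _ hα]
    have hsplit : ∫ x in E, f x ∂μ = ∫ x in D, f x ∂μ + ∫ x in E \ D, f x ∂μ := by
      rw [← setIntegral_union Set.disjoint_sdiff_right (hEm.diff hDm) hfi.integrableOn
        hfi.integrableOn, Set.union_diff_cancel hDsub]
    have h1 : ∫ x in D, f x ∂μ ≤ sSup Sa := le_csSup bddA ⟨D, hDm, hDμ, rfl⟩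
    have h2 := abs_le.mp (hE _ (hEm.diff hDm) hdiff)
    linarith
  rw [abs_sub_le_iff]
  constructor <;> linarith


end Aux

/-- The function `α ↦ sup{∫_E f dμ : E measurable, μ E = α}` is continuous on
`[0, μ(X)]` (at `α = 0` its value is `0`, since only null sets occur there). -/
theorem stmt5 {X : Type*} [MeasurableSpace X] (μ : Measure X) [IsFiniteMeasure μ]
    (hμ : Nonatomic μ) (f : X → ℝ) (hf : Measurable f) (hfi : Integrable f μ) :
    ContinuousOn
      (fun α : ℝ => sSup {r : ℝ | ∃ E : Set X, MeasurableSet E ∧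
        μ E = ENNReal.ofReal α ∧ r = ∫ x in E, f x ∂μ})
      (Set.Icc 0 (μ Set.univ).toReal) := by
  rw [Metric.continuousOn_iff]
  intro b hb ε hε
  obtain ⟨δ, hδ0, hδ⟩ := abscont hfi (half_pos hε)
  refine ⟨δ, hδ0, fun a ha hab => ?_⟩
  rw [Real.dist_eq] at hab ⊢
  have key : ∀ x y : ℝ, 0 ≤ x → x ≤ y → y ≤ (μ Set.univ).toReal → y - x < δ →
      |sSup {r : ℝ | ∃ E : Set X, MeasurableSet E ∧
          μ E = ENNReal.ofReal x ∧ r = ∫ z in E, f z ∂μ} -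
        sSup {r : ℝ | ∃ E : Set X, MeasurableSet E ∧
          μ E = ENNReal.ofReal y ∧ r = ∫ z in E, f z ∂μ}| ≤ ε / 2 := by
    intro x y hx hxy hy hyd
    refine step_est hμ hfi hx hxy hy fun E hEm hEμ => hδ E (hEμ.trans ?_)
    exact ENNReal.ofReal_le_ofReal hyd.le
  rcases le_total a b with h | h
  · have := key a b ha.1 h hb.2 (by rw [abs_sub_comm] at hab; linarith [abs_lt.mp hab])
    calc |sSup _ - sSup _| ≤ ε / 2 := this
      _ < ε := half_lt_self hε
  · have := key b a hb.1 h ha.2 (by linarith [abs_lt.mp hab])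
    rw [abs_sub_comm]
    calc |sSup _ - sSup _| ≤ ε / 2 := this
      _ < ε := half_lt_self hε
end

section
/- Let X be a compact metric space and μ a finite Borel measure on X. Let B(X) denote the space of bounded Borel functions X → ℝ and C(X) the space of continuous functions X → ℝ. If p : C(X) → ℝ is convex and strongly continuous, then there exists a unique strongly continuous function q : B(X) → ℝ with q = p on C(X), and this q is convex. -/
open MeasureTheory Filter Topology
open scoped ENNReal

def StronglyContinuousOn {X : Type*} [MeasurableSpace X] (μ : Measure X)
    (D : Set (X → ℝ)) (p : (X → ℝ) → ℝ) : Prop :=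
  ∀ ξ : ℕ → X → ℝ, (∀ k, ξ k ∈ D) → (∃ C : ℝ, ∀ k x, |ξ k x| ≤ C) →
    (∀ᵐ x ∂μ, ∃ l : ℝ, Tendsto (fun k => ξ k x) atTop (𝓝 l)) →
    ∃ L : ℝ, Tendsto (fun k => p (ξ k)) atTop (𝓝 L)

section auxx
open BoundedContinuousFunction

lemma myInterleave_tendsto {α : Type*} [TopologicalSpace α] {u v : ℕ → α} {l : α}
    (hu : Tendsto u atTop (𝓝 l)) (hv : Tendsto v atTop (𝓝 l)) :
    Tendsto (fun k => if Even k then u (k / 2) else v (k / 2)) atTop (𝓝 l) := by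
  intro s hs
  rw [mem_map, mem_atTop_sets]
  obtain ⟨N1, hN1⟩ := mem_atTop_sets.1 (hu hs)
  obtain ⟨N2, hN2⟩ := mem_atTop_sets.1 (hv hs)
  refine ⟨2 * (max N1 N2), fun k hk => ?_⟩
  have hk2 : max N1 N2 ≤ k / 2 := by omega
  by_cases h : Even k
  · simpa [h] using hN1 _ (le_trans (le_max_left _ _) hk2)
  · simpa [h] using hN2 _ (le_trans (le_max_right _ _) hk2)

lemma myEven_part {α : Type*} [TopologicalSpace α] {ρ : ℕ → α} {L : α}
    (h : Tendsto ρ atTop (𝓝 L)) : Tendsto (fun j => ρ (2 * j)) atTop (𝓝 L) :=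
  h.comp (tendsto_atTop_atTop.2 fun b => ⟨b, fun a ha => by omega⟩)

lemma myOdd_part {α : Type*} [TopologicalSpace α] {ρ : ℕ → α} {L : α}
    (h : Tendsto ρ atTop (𝓝 L)) : Tendsto (fun j => ρ (2 * j + 1)) atTop (𝓝 L) :=
  h.comp (tendsto_atTop_atTop.2 fun b => ⟨b, fun a ha => by omega⟩)

lemma myAuxTendsto {u v : ℕ → ℝ} {L : ℝ} (h : Tendsto v atTop (𝓝 L))
    (hd : ∀ᶠ k in atTop, |u k - v k| ≤ 1 / (k + 1)) : Tendsto u atTop (𝓝 L) := by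
  have h0 : Tendsto (fun k => u k - v k) atTop (𝓝 0) :=
    squeeze_zero_norm' (hd.mono fun k hk => by simpa using hk)
      tendsto_one_div_add_atTop_nhds_zero_nat
  simpa using h.add h0

lemma myApprox {X : Type*} [MetricSpace X] [CompactSpace X] [MeasurableSpace X] [BorelSpace X]
    (μ : Measure X) [IsFiniteMeasure μ] (f : X → ℝ) (hf : Measurable f) (M : ℝ)
    (hM : ∀ x, |f x| ≤ M) :
    ∃ ξ : ℕ → X → ℝ, (∀ k, Continuous (ξ k)) ∧ (∀ k x, |ξ k x| ≤ M) ∧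
      ∀ᵐ x ∂μ, Tendsto (fun k => ξ k x) atTop (𝓝 (f x)) := by
  have hmem : MemLp f 1 μ :=
    MemLp.of_bound hf.aestronglyMeasurable M (Eventually.of_forall fun x => by simpa using hM x)
  have hg : ∀ n : ℕ, ∃ g : X →ᵇ ℝ, eLpNorm (f - ⇑g) 1 μ ≤ ENNReal.ofReal (1 / (n + 1)) := by
    intro n
    obtain ⟨g, hg, -⟩ := hmem.exists_boundedContinuous_eLpNorm_sub_le (by norm_num)
      (ε := ENNReal.ofReal (1 / (n + 1))) (ENNReal.ofReal_pos.2 (by positivity)).ne'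
    exact ⟨g, hg⟩
  choose g hgle using hg
  have htm : TendstoInMeasure μ (fun n => ⇑(g n)) atTop f := by
    refine tendstoInMeasure_of_tendsto_eLpNorm (p := 1) one_ne_zero
      (fun n => (g n).continuous.aestronglyMeasurable) hf.aestronglyMeasurable ?_
    refine tendsto_of_tendsto_of_tendsto_of_le_of_le tendsto_const_nhds
      (by simpa using (ENNReal.tendsto_ofReal tendsto_one_div_add_atTop_nhds_zero_nat))
      (fun n => zero_le) (fun n => ?_)
    rw [eLpNorm_sub_comm]
    simpa [one_div] using hgle n
  obtain ⟨ns, -, hns⟩ := htm.exists_seq_tendsto_ae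
  refine ⟨fun k x => max (-M) (min M (g (ns k) x)), fun k => ?_, fun k x => ?_, ?_⟩
  · exact continuous_const.max (continuous_const.min (g (ns k)).continuous)
  · have h0 : 0 ≤ M := (abs_nonneg _).trans (hM x)
    exact abs_le.2 ⟨le_max_left _ _, max_le (by linarith) (min_le_left _ _)⟩
  · filter_upwards [hns] with x hx
    have h1 : Tendsto (fun k => max (-M) (min M (g (ns k) x))) atTop
        (𝓝 (max (-M) (min M (f x)))) :=
      tendsto_const_nhds.max (tendsto_const_nhds.min hx)
    have h2 : max (-M) (min M (f x)) = f x := by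
      have := abs_le.1 (hM x)
      rw [min_eq_right this.2, max_eq_right this.1]
    rwa [h2] at h1
end auxx

/-- Theorem 5.2 (second half): a convex, strongly continuous `p` on `C(X)` extends
uniquely to a strongly continuous `q` on the bounded Borel functions `B(X)`, and the
extension is convex. -/
theorem stmt7 {X : Type*} [MetricSpace X] [CompactSpace X] [MeasurableSpace X]
    [BorelSpace X] (μ : Measure X) [IsFiniteMeasure μ]
    (C : Set (X → ℝ)) (hC : C = {f : X → ℝ | Continuous f})
    (B : Set (X → ℝ)) (hB : B = {f : X → ℝ | Measurable f ∧ ∃ M : ℝ, ∀ x, |f x| ≤ M})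
    (p : (X → ℝ) → ℝ)
    (hpconv : ConvexOn ℝ C p)
    (hpsc : StronglyContinuousOn μ C p) :
    ∃ q : (X → ℝ) → ℝ,
      (StronglyContinuousOn μ B q ∧ (∀ f ∈ C, q f = p f) ∧ ConvexOn ℝ B q) ∧
      ∀ q' : (X → ℝ) → ℝ, StronglyContinuousOn μ B q' → (∀ f ∈ C, q' f = p f) →
        ∀ f ∈ B, q' f = q f := by
  classical
  subst hC hB
  -- continuous functions are bounded and measurable
  have hCB : ∀ f : X → ℝ, Continuous f → (Measurable f ∧ ∃ M : ℝ, ∀ x, |f x| ≤ M) := by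
    intro f hf
    refine ⟨hf.measurable, ?_⟩
    rcases isEmpty_or_nonempty X with h | h
    · exact ⟨0, fun x => (IsEmpty.false x).elim⟩
    · obtain ⟨x0, -, hx0⟩ := isCompact_univ.exists_isMaxOn Set.univ_nonempty
        hf.abs.continuousOn
      exact ⟨|f x0|, fun x => hx0 (Set.mem_univ x)⟩
  -- key existence and uniqueness of the extension's value
  have key : ∀ f : X → ℝ, (Measurable f ∧ ∃ M : ℝ, ∀ x, |f x| ≤ M) →
      ∃ L : ℝ, ∀ ζ : ℕ → X → ℝ, (∀ k, Continuous (ζ k)) →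
        (∃ Cb : ℝ, ∀ k x, |ζ k x| ≤ Cb) →
        (∀ᵐ x ∂μ, Tendsto (fun k => ζ k x) atTop (𝓝 (f x))) →
        Tendsto (fun k => p (ζ k)) atTop (𝓝 L) := by
    rintro f ⟨hfm, M, hfM⟩
    obtain ⟨ξ, hξc, hξb, hξae⟩ := myApprox μ f hfm M hfM
    obtain ⟨L, hL⟩ := hpsc ξ hξc ⟨M, hξb⟩ (hξae.mono fun x hx => ⟨f x, hx⟩)
    refine ⟨L, fun ζ hζc hζb hζae => ?_⟩
    obtain ⟨Cb, hCb⟩ := hζb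
    obtain ⟨L2, hL2⟩ := hpsc ζ hζc ⟨Cb, hCb⟩ (hζae.mono fun x hx => ⟨f x, hx⟩)
    set ρ : ℕ → X → ℝ := fun k => if Even k then ξ (k / 2) else ζ (k / 2) with hρ
    have hρc : ∀ k, Continuous (ρ k) := by
      intro k
      by_cases h : Even k
      · simpa only [hρ, if_pos h] using hξc _
      · simpa only [hρ, if_neg h] using hζc _
    have hρb : ∀ k x, |ρ k x| ≤ max M Cb := by
      intro k x
      by_cases h : Even k
      · simp only [hρ, if_pos h]; exact (hξb _ x).trans (le_max_left _ _)
      · simp only [hρ, if_neg h]; exact (hCb _ x).trans (le_max_right _ _)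
    have hρae : ∀ᵐ x ∂μ, ∃ l, Tendsto (fun k => ρ k x) atTop (𝓝 l) := by
      filter_upwards [hξae, hζae] with x hx1 hx2
      refine ⟨f x, ?_⟩
      have h := myInterleave_tendsto hx1 hx2
      convert h using 2 with k
      simp only [hρ]
      by_cases hk : Even k <;> simp [hk]
    obtain ⟨L3, hL3⟩ := hpsc ρ hρc ⟨max M Cb, hρb⟩ hρae
    have he : ∀ j, ρ (2 * j) = ξ j := fun j => by
      have h : Even (2 * j) := even_two_mul j
      have h2 : 2 * j / 2 = j := by omega
      simp only [hρ, if_pos h, h2]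
    have ho : ∀ j, ρ (2 * j + 1) = ζ j := fun j => by
      have h : ¬ Even (2 * j + 1) := by rw [Nat.even_iff]; omega
      have h2 : (2 * j + 1) / 2 = j := by omega
      simp only [hρ, if_neg h, h2]
    have hLe : Tendsto (fun j => p (ξ j)) atTop (𝓝 L3) := by
      have h1 := myEven_part hL3
      simp only [he] at h1; exact h1
    have hLo : Tendsto (fun j => p (ζ j)) atTop (𝓝 L3) := by
      have h1 := myOdd_part hL3
      simp only [ho] at h1; exact h1
    exact (tendsto_nhds_unique hLe hL) ▸ hLo
  choose Q hQ using key
  set q : (X → ℝ) → ℝ :=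
    fun f => if h : Measurable f ∧ ∃ M : ℝ, ∀ x, |f x| ≤ M then Q f h else 0 with hqdef
  have hqB : ∀ (f : X → ℝ) (h : Measurable f ∧ ∃ M : ℝ, ∀ x, |f x| ≤ M), q f = Q f h := by
    intro f h; simp only [hqdef]; rw [dif_pos h]
  -- convexity of B
  have hBconv : Convex ℝ {f : X → ℝ | Measurable f ∧ ∃ M : ℝ, ∀ x, |f x| ≤ M} := by
    rintro f ⟨hfm, M, hM⟩ g ⟨hgm, N, hN⟩ a b ha hb hab
    refine ⟨(hfm.const_smul a).add (hgm.const_smul b), a * M + b * N, fun x => ?_⟩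
    have h1 : (a • f + b • g) x = a * f x + b * g x := rfl
    rw [h1]
    calc |a * f x + b * g x| ≤ |a * f x| + |b * g x| := abs_add_le _ _
      _ = a * |f x| + b * |g x| := by
          rw [abs_mul, abs_mul, abs_of_nonneg ha, abs_of_nonneg hb]
      _ ≤ a * M + b * N :=
          add_le_add (mul_le_mul_of_nonneg_left (hM x) ha)
            (mul_le_mul_of_nonneg_left (hN x) hb)
  refine ⟨q, ⟨?_, ?_, ?_⟩, ?_⟩
  · -- strong continuity of q
    intro η hηB hηb hηae
    obtain ⟨Cu, hCu⟩ := hηb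
    have happ := fun k : ℕ => myApprox μ (η k) (hηB k).1 Cu (hCu k)
    choose ζ hζc hζb hζae using happ
    have hqη : ∀ k, Tendsto (fun j => p (ζ k j)) atTop (𝓝 (q (η k))) := by
      intro k
      rw [hqB (η k) (hηB k)]
      exact hQ (η k) (hηB k) (ζ k) (hζc k) ⟨Cu, hζb k⟩ (hζae k)
    have htm : ∀ k, TendstoInMeasure μ (fun j => ζ k j) atTop (η k) := fun k =>
      tendstoInMeasure_of_tendsto_ae (fun j => (hζc k j).aestronglyMeasurable) (hζae k)
    have hpick : ∀ k : ℕ, ∃ j : ℕ,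
        μ {x | 1 / ((k : ℝ) + 1) ≤ dist (ζ k j x) (η k x)} ≤ (2⁻¹ : ℝ≥0∞) ^ k ∧
        |p (ζ k j) - q (η k)| ≤ 1 / ((k : ℝ) + 1) := by
      intro k
      have h1 : ∀ᶠ j in atTop,
          μ {x | 1 / ((k : ℝ) + 1) ≤ dist (ζ k j x) (η k x)} ≤ (2⁻¹ : ℝ≥0∞) ^ k := by
        have := tendstoInMeasure_iff_dist.1 (htm k) (1 / ((k : ℝ) + 1)) (by positivity)
        refine (this.eventually_le_const ?_)
        exact ENNReal.pow_pos (by norm_num) k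
      have h2 : ∀ᶠ j in atTop, |p (ζ k j) - q (η k)| ≤ 1 / ((k : ℝ) + 1) := by
        have := Metric.tendsto_atTop.1 (hqη k) (1 / ((k : ℝ) + 1)) (by positivity)
        obtain ⟨N, hN⟩ := this
        exact eventually_atTop.2 ⟨N, fun j hj => by
          simpa [Real.dist_eq] using (hN j hj).le⟩
      exact (h1.and h2).exists
    choose jj hjj using hpick
    set g : ℕ → X → ℝ := fun k => ζ k (jj k) with hgdef
    have hsum : (∑' k : ℕ, μ {x | 1 / ((k : ℝ) + 1) ≤ dist (g k x) (η k x)}) ≠ ∞ := by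
      refine ne_top_of_le_ne_top ?_ (ENNReal.tsum_le_tsum (fun k => (hjj k).1))
      rw [ENNReal.tsum_geometric]
      simp
    have hBC := ae_eventually_notMem (μ := μ) hsum
    have hgae : ∀ᵐ x ∂μ, ∃ l : ℝ, Tendsto (fun k => g k x) atTop (𝓝 l) := by
      filter_upwards [hηae, hBC] with x hx1 hx2
      obtain ⟨l, hl⟩ := hx1
      refine ⟨l, ?_⟩
      have hc : Tendsto (fun k => dist (g k x) l) atTop (𝓝 0) := by
        have hb : ∀ᶠ k in atTop, dist (g k x) l ≤ 1 / ((k : ℝ) + 1) + dist (η k x) l := by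
          filter_upwards [hx2] with k hk
          simp only [Set.mem_setOf_eq, not_le] at hk
          calc dist (g k x) l ≤ dist (g k x) (η k x) + dist (η k x) l := dist_triangle _ _ _
            _ ≤ 1 / ((k : ℝ) + 1) + dist (η k x) l := by linarith
        have hlim : Tendsto (fun k : ℕ => 1 / ((k : ℝ) + 1) + dist (η k x) l) atTop (𝓝 0) := by
          have := tendsto_one_div_add_atTop_nhds_zero_nat.add
            (tendsto_iff_dist_tendsto_zero.1 hl)
          simpa using this
        exact squeeze_zero' (Eventually.of_forall fun k => dist_nonneg) hb hlim
      exact tendsto_iff_dist_tendsto_zero.2 hc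
    obtain ⟨L, hL⟩ := hpsc g (fun k => hζc k (jj k)) ⟨Cu, fun k x => hζb k (jj k) x⟩ hgae
    refine ⟨L, myAuxTendsto hL (Eventually.of_forall fun k => ?_)⟩
    rw [abs_sub_comm]
    exact (hjj k).2
  · -- q = p on continuous functions
    intro f hf
    have hfB := hCB f hf
    rw [hqB f hfB]
    obtain ⟨M, hM⟩ := hfB.2
    have h1 := hQ f hfB (fun _ => f) (fun _ => hf) ⟨M, fun _ x => hM x⟩
      (Eventually.of_forall fun x => tendsto_const_nhds)
    exact tendsto_nhds_unique h1 tendsto_const_nhds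
  · -- convexity of q
    refine ⟨hBconv, ?_⟩
    intro f hf g hg a b ha hb hab
    obtain ⟨hfm, Mf, hMf⟩ := hf
    obtain ⟨hgm, Mg, hMg⟩ := hg
    have hf' : Measurable f ∧ ∃ M : ℝ, ∀ x, |f x| ≤ M := ⟨hfm, Mf, hMf⟩
    have hg' : Measurable g ∧ ∃ M : ℝ, ∀ x, |g x| ≤ M := ⟨hgm, Mg, hMg⟩
    have hmem : Measurable (a • f + b • g) ∧ ∃ M : ℝ, ∀ x, |(a • f + b • g) x| ≤ M :=
      hBconv hf' hg' ha hb hab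
    obtain ⟨ξ, hξc, hξb, hξae⟩ := myApprox μ f hfm Mf hMf
    obtain ⟨ζ, hζc, hζb, hζae⟩ := myApprox μ g hgm Mg hMg
    have hcomb := hQ (a • f + b • g) hmem (fun k => a • ξ k + b • ζ k)
      (fun k => ((hξc k).const_smul a).add ((hζc k).const_smul b))
      ⟨a * Mf + b * Mg, fun k x => by
        simp only [Pi.add_apply, Pi.smul_apply, smul_eq_mul]
        calc |a * ξ k x + b * ζ k x| ≤ |a * ξ k x| + |b * ζ k x| := abs_add_le _ _
          _ = a * |ξ k x| + b * |ζ k x| := by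
              rw [abs_mul, abs_mul, abs_of_nonneg ha, abs_of_nonneg hb]
          _ ≤ a * Mf + b * Mg :=
              add_le_add (mul_le_mul_of_nonneg_left (hξb k x) ha)
                (mul_le_mul_of_nonneg_left (hζb k x) hb)⟩
      (by
        filter_upwards [hξae, hζae] with x hx1 hx2
        have : Tendsto (fun k => a * ξ k x + b * ζ k x) atTop (𝓝 (a * f x + b * g x)) :=
          (hx1.const_mul a).add (hx2.const_mul b)
        exact this)
    have hfq := hQ f hf' ξ hξc ⟨Mf, hξb⟩ hξae
    have hgq := hQ g hg' ζ hζc ⟨Mg, hζb⟩ hζae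
    rw [hqB _ hmem, hqB _ hf', hqB _ hg']
    have hrhs : Tendsto (fun k => a * p (ξ k) + b * p (ζ k)) atTop
        (𝓝 (a * Q f hf' + b * Q g hg')) := (hfq.const_mul a).add (hgq.const_mul b)
    have hle : ∀ k, p (a • ξ k + b • ζ k) ≤ a * p (ξ k) + b * p (ζ k) := by
      intro k
      have := hpconv.2 (hξc k) (hζc k) ha hb hab
      simpa [smul_eq_mul] using this
    have := le_of_tendsto_of_tendsto' hcomb hrhs hle
    simpa [smul_eq_mul] using this
  · -- uniqueness
    intro q' hq'sc hq'C f hf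
    have hf' : Measurable f ∧ ∃ M : ℝ, ∀ x, |f x| ≤ M := hf
    obtain ⟨hfm, M, hM⟩ := hf'
    have hf'' : Measurable f ∧ ∃ M : ℝ, ∀ x, |f x| ≤ M := ⟨hfm, M, hM⟩
    obtain ⟨ξ, hξc, hξb, hξae⟩ := myApprox μ f hfm M hM
    set ρ : ℕ → X → ℝ := fun k => if Even k then ξ (k / 2) else f with hρ
    have hρB : ∀ k, ρ k ∈ {f : X → ℝ | Measurable f ∧ ∃ M : ℝ, ∀ x, |f x| ≤ M} := by
      intro k
      by_cases h : Even k
      · simpa only [hρ, if_pos h, Set.mem_setOf_eq] using hCB _ (hξc _)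
      · simpa only [hρ, if_neg h, Set.mem_setOf_eq] using hf''
    have hρb : ∀ k x, |ρ k x| ≤ M := by
      intro k x
      by_cases h : Even k
      · simp only [hρ, if_pos h]; exact hξb _ x
      · simp only [hρ, if_neg h]; exact hM x
    have hρae : ∀ᵐ x ∂μ, ∃ l : ℝ, Tendsto (fun k => ρ k x) atTop (𝓝 l) := by
      filter_upwards [hξae] with x hx
      refine ⟨f x, ?_⟩
      have h := myInterleave_tendsto hx (tendsto_const_nhds (x := f x))
      convert h using 2 with k
      simp only [hρ]
      by_cases hk : Even k <;> simp [hk]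
    obtain ⟨L, hL⟩ := hq'sc ρ hρB ⟨M, hρb⟩ hρae
    have he : ∀ j, ρ (2 * j) = ξ j := fun j => by
      have h : Even (2 * j) := even_two_mul j
      have h2 : 2 * j / 2 = j := by omega
      simp only [hρ, if_pos h, h2]
    have ho : ∀ j, ρ (2 * j + 1) = f := fun j => by
      have h : ¬ Even (2 * j + 1) := by rw [Nat.even_iff]; omega
      simp only [hρ, if_neg h]
    have hLe : Tendsto (fun j => p (ξ j)) atTop (𝓝 L) := by
      have h1 := myEven_part hL
      have h2 : ∀ j, q' (ρ (2 * j)) = p (ξ j) := fun j => by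
        rw [he j]; exact hq'C _ (hξc j)
      simp only [h2] at h1; exact h1
    have hLo : Tendsto (fun _ : ℕ => q' f) atTop (𝓝 L) := by
      have h1 := myOdd_part hL
      have h2 : ∀ j, q' (ρ (2 * j + 1)) = q' f := fun j => by rw [ho j]
      simp only [h2] at h1; exact h1
    have hq1f : q' f = L := tendsto_nhds_unique tendsto_const_nhds hLo
    have hQf := hQ f hf'' ξ hξc ⟨M, hξb⟩ hξae
    have : Q f hf'' = L := tendsto_nhds_unique hQf hLe
    rw [hq1f, hqB f hf'', this]
end

section
/- Let X be a Polish space (equipped with its Borel σ-algebra) and μ a finite nonatomic Borel measure on X with μ(X) > 0. Let B(X) be the space of bounded Borel functions X → ℝ with the supremum norm ‖·‖_∞. Suppose p : B(X) → ℝ is convex, invariant under strict rearrangements (p(ξ) = p(η) whenever ξ, η ∈ B(X) are equidistributed), and strongly continuous. Then p is Lipschitz continuous on bounded sets: for every R > 0 there exists L > 0 such that |p(ξ) − p(η)| ≤ L ‖ξ − η‖_∞ whenever ‖ξ‖_∞ ≤ R and ‖η‖_∞ ≤ R. -/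
open MeasureTheory Filter Topology

open ProbabilityTheory


/-- Helly's selection principle (weak form): a uniformly bounded sequence of monotone
functions has a subsequence converging off a countable set. -/
lemma helly_selection (r : ℝ) (Q : ℕ → ℝ → ℝ) (hmono : ∀ k, Monotone (Q k))
    (hbd : ∀ k t, Q k t ∈ Set.Icc (-r) r) :
    ∃ φ : ℕ → ℕ, StrictMono φ ∧ ∃ D : Set ℝ, D.Countable ∧
      ∀ t ∉ D, ∃ l : ℝ, Tendsto (fun k => Q (φ k) t) atTop (𝓝 l) := by
  -- compactness in the product space
  set P := ℚ → Set.Icc (-r) r with hP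
  have : SeqCompactSpace P := inferInstance
  obtain ⟨a, φ, hφ, ha⟩ := SeqCompactSpace.tendsto_subseq
    (fun k => (fun q => ⟨Q k q, hbd k q⟩ : P))
  set f : ℚ → ℝ := fun q => (a q : ℝ) with hf
  have hconv : ∀ q : ℚ, Tendsto (fun k => Q (φ k) (q : ℝ)) atTop (𝓝 (f q)) := by
    intro q
    have := (continuous_apply q).continuousAt.tendsto.comp ha
    exact (continuous_subtype_val.continuousAt.tendsto.comp this)
  have hfb : ∀ q : ℚ, f q ∈ Set.Icc (-r) r := fun q => (a q).2
  have hfmono : ∀ q q' : ℚ, (q:ℝ) ≤ q' → f q ≤ f q' := by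
    intro q q' h
    exact le_of_tendsto_of_tendsto' (hconv q) (hconv q')
      (fun k => hmono (φ k) h)
  -- the candidate limit function
  set S : ℝ → Set ℝ := fun t => f '' {q : ℚ | t < (q:ℝ)} with hS
  have hSne : ∀ t, (S t).Nonempty := by
    intro t
    obtain ⟨q, hq⟩ := exists_rat_gt t
    exact ⟨f q, ⟨q, hq, rfl⟩⟩
  have hSbd : ∀ t, BddBelow (S t) := by
    intro t
    exact ⟨-r, fun y ⟨q, _, hq⟩ => hq ▸ (hfb q).1⟩
  set h : ℝ → ℝ := fun t => sInf (S t) with hh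
  have hhmono : Monotone h := by
    intro t t' htt'
    exact csInf_le_csInf (hSbd t) (hSne t')
      (Set.image_mono (fun q hq => lt_of_le_of_lt htt' hq))
  -- h t ≤ f q whenever t < q
  have h_le_f : ∀ (t : ℝ) (q : ℚ), t < (q:ℝ) → h t ≤ f q := by
    intro t q hq
    exact csInf_le (hSbd t) ⟨q, hq, rfl⟩
  have f_le_h : ∀ (t : ℝ) (q : ℚ), (q:ℝ) ≤ t → f q ≤ h t := by
    intro t q hq
    refine le_csInf (hSne t) ?_
    rintro y ⟨q', hq', rfl⟩
    exact hfmono q q' (le_of_lt (lt_of_le_of_lt hq hq'))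
  refine ⟨φ, hφ, {t | ¬ ContinuousAt h t}, hhmono.countable_not_continuousAt, ?_⟩
  intro t ht
  simp only [Set.mem_setOf_eq, not_not] at ht
  refine ⟨h t, Metric.tendsto_atTop.2 ?_⟩
  intro ε hε
  -- by continuity pick δ
  obtain ⟨δ, hδ, hcont⟩ := Metric.continuousAt_iff.1 ht (ε/4) (by linarith)
  -- rationals around t
  obtain ⟨q₁, hq₁t, hq₁⟩ := exists_rat_btwn (show t - δ/2 < t by linarith)
  obtain ⟨q₂, hq₂, hq₂t⟩ := exists_rat_btwn (show t < t + δ/2 by linarith)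
  have hd1 : dist (h (q₁:ℝ)) (h t) < ε/4 := hcont (by rw [Real.dist_eq]; rw [abs_lt]; constructor <;> linarith)
  have hd2 : dist (h (q₂:ℝ)) (h t) < ε/4 := hcont (by rw [Real.dist_eq]; rw [abs_lt]; constructor <;> linarith)
  -- f q₁ and f q₂ are close to h t
  obtain ⟨q₀, hq₀1, hq₀2⟩ := exists_rat_btwn (show t - δ/2 < (q₁:ℝ) by linarith)
  -- h q₀' ≤ f q₁ ≤ h q₁ :   take s slightly less than q₁
  have hfq₁_ge : h t - ε/2 < f q₁ := by
    have h1 : h (q₀:ℝ) ≤ f q₁ := h_le_f _ _ hq₀2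
    have h2 : dist (h (q₀:ℝ)) (h t) < ε/4 := hcont (by rw [Real.dist_eq, abs_lt]; constructor <;> linarith)
    rw [Real.dist_eq, abs_lt] at h2
    linarith
  have hfq₂_le : f q₂ < h t + ε/2 := by
    have h1 : f q₂ ≤ h (q₂:ℝ) := f_le_h _ _ le_rfl
    rw [Real.dist_eq, abs_lt] at hd2
    linarith
  -- eventual bounds
  have e1 := (hconv q₁).eventually (eventually_abs_sub_lt (f q₁) (show (0:ℝ) < ε/4 by linarith))
  have e2 := (hconv q₂).eventually (eventually_abs_sub_lt (f q₂) (show (0:ℝ) < ε/4 by linarith))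
  obtain ⟨N, hN⟩ := (e1.and e2).exists_forall_of_atTop
  refine ⟨N, fun n hn => ?_⟩
  obtain ⟨h1, h2⟩ := hN n hn
  have hlow : Q (φ n) (q₁:ℝ) ≤ Q (φ n) t := hmono (φ n) (le_of_lt hq₁)
  have hhigh : Q (φ n) t ≤ Q (φ n) (q₂:ℝ) := hmono (φ n) (le_of_lt hq₂)
  rw [abs_sub_lt_iff] at h1 h2
  rw [Real.dist_eq, abs_lt]
  constructor <;> nlinarith


/-- The cdf of an atomless probability measure on ℝ pushes it forward to the uniform
distribution on `[0,1]`. -/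
lemma map_cdf_eq_uniform (ρ : Measure ℝ) [IsProbabilityMeasure ρ] [NullSingletonClass ρ] :
    Measure.map (cdf ρ) ρ = volume.restrict (Set.Icc (0:ℝ) 1) := by
  set F := cdf ρ with hF
  have hFmeas : Measurable F := F.mono.measurable
  have hU : IsProbabilityMeasure (volume.restrict (Set.Icc (0:ℝ) 1)) :=
    ⟨by simp [Real.volume_Icc]⟩
  have hM : IsProbabilityMeasure (Measure.map (F : ℝ → ℝ) ρ) :=
    Measure.isProbabilityMeasure_map hFmeas.aemeasurable
  -- F is "continuous" in the sense that F = leftLim F everywhere (no atoms)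
  have hnoj : ∀ a : ℝ, Function.leftLim F a = F a := by
    intro a
    have h1 : F.measure {a} = ENNReal.ofReal (F a - Function.leftLim F a) :=
      F.measure_singleton a
    rw [measure_cdf, measure_singleton] at h1
    have h2 : F a - Function.leftLim F a ≤ 0 := by
      by_contra hc
      push_neg at hc
      rw [eq_comm, ENNReal.ofReal_eq_zero] at h1
      · linarith
    have h3 : Function.leftLim F a ≤ F a := F.mono.leftLim_le le_rfl
    linarith
  refine MeasureTheory.Measure.ext_of_Iic _ _ (fun t => ?_)
  rw [Measure.map_apply hFmeas measurableSet_Iic]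
  rcases lt_or_ge t 0 with ht | ht
  · -- t < 0 : both sides are 0
    have h1 : F ⁻¹' Set.Iic t = ∅ := by
      ext y
      simp only [Set.mem_preimage, Set.mem_Iic, Set.mem_empty_iff_false, iff_false, not_le]
      exact lt_of_lt_of_le ht (cdf_nonneg ρ y)
    rw [h1, measure_empty, Measure.restrict_apply measurableSet_Iic]
    have : Set.Iic t ∩ Set.Icc (0:ℝ) 1 = ∅ := by
      ext y; simp only [Set.mem_inter_iff, Set.mem_Iic, Set.mem_Icc, Set.mem_empty_iff_false,
        iff_false]
      rintro ⟨h1, h2, _⟩; linarith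
    rw [this, measure_empty]
  rcases le_or_gt 1 t with ht1 | ht1
  · -- t ≥ 1 : both sides are 1
    have h1 : F ⁻¹' Set.Iic t = Set.univ := by
      ext y
      simp only [Set.mem_preimage, Set.mem_Iic, Set.mem_univ, iff_true]
      exact le_trans (cdf_le_one ρ y) ht1
    rw [h1, measure_univ, Measure.restrict_apply measurableSet_Iic]
    have : Set.Iic t ∩ Set.Icc (0:ℝ) 1 = Set.Icc (0:ℝ) 1 := by
      rw [Set.inter_eq_right]
      intro y hy; exact le_trans hy.2 ht1
    rw [this, Real.volume_Icc]; norm_num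
  · -- 0 ≤ t < 1
    have hRHS : volume.restrict (Set.Icc (0:ℝ) 1) (Set.Iic t) = ENNReal.ofReal t := by
      rw [Measure.restrict_apply measurableSet_Iic]
      have : Set.Iic t ∩ Set.Icc (0:ℝ) 1 = Set.Icc 0 t := by
        ext y; simp only [Set.mem_inter_iff, Set.mem_Iic, Set.mem_Icc]
        constructor
        · rintro ⟨h1, h2, _⟩; exact ⟨h2, h1⟩
        · rintro ⟨h1, h2⟩; exact ⟨h2, h1, le_trans h2 ht1.le⟩
      rw [this, Real.volume_Icc, sub_zero]
    rw [hRHS]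
    by_cases hne : (F ⁻¹' Set.Iic t).Nonempty
    · -- the set {F ≤ t} is Iic a for a := sSup
      have hbdd : BddAbove (F ⁻¹' Set.Iic t) := by
        have := tendsto_cdf_atTop ρ
        obtain ⟨y₀, hy₀⟩ := (this.eventually (eventually_gt_nhds ht1)).exists_forall_of_atTop
        refine ⟨y₀, fun y hy => ?_⟩
        by_contra hc
        push_neg at hc
        exact absurd (hy₀ y hc.le) (not_lt.2 hy)
      set a := sSup (F ⁻¹' Set.Iic t) with ha
      have hFa_le : F a ≤ t := by
        rw [← hnoj a]
        have hev : ∀ᶠ y in 𝓝[<] a, F y ≤ t := by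
          filter_upwards [self_mem_nhdsWithin] with y hy
          obtain ⟨s, hs, hys⟩ := exists_lt_of_lt_csSup hne hy
          exact le_trans (F.mono hys.le) hs
        exact le_of_tendsto (F.mono.tendsto_leftLim a) hev
      have hFa_ge : t ≤ F a := by
        have hev : ∀ᶠ y in 𝓝[>] a, t ≤ F y := by
          filter_upwards [self_mem_nhdsWithin] with y hy
          by_contra hc
          push_neg at hc
          exact absurd (le_csSup hbdd hc.le) (not_le.2 hy)
        have htd : Tendsto F (𝓝[>] a) (𝓝 (F a)) :=
          (F.right_continuous a).tendsto.mono_left (nhdsWithin_mono a Set.Ioi_subset_Ici_self)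
        exact ge_of_tendsto htd hev
      have hset : F ⁻¹' Set.Iic t = Set.Iic a := by
        ext y
        simp only [Set.mem_preimage, Set.mem_Iic]
        constructor
        · intro hy; exact le_csSup hbdd hy
        · intro hy; exact le_trans (F.mono hy) hFa_le
      rw [hset, ← ofReal_cdf ρ a]
      congr 1
      linarith
    · -- empty: then t must satisfy ofReal t = 0, i.e. F y > t always; since F → 0 atBot, t ≤ 0, so t = 0
      rw [Set.not_nonempty_iff_eq_empty] at hne
      rw [hne, measure_empty]
      have : t ≤ 0 := by
        by_contra hc
        push_neg at hc
        have := tendsto_cdf_atBot ρ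
        obtain ⟨y₀, hy₀⟩ := (this.eventually (eventually_lt_nhds hc)).exists_forall_of_atBot
        have : y₀ ∈ F ⁻¹' Set.Iic t := (hy₀ y₀ le_rfl).le
        rw [hne] at this
        exact this
      have ht0 : t = 0 := le_antisymm this ht
      rw [ht0]; simp


/-- Inverse-cdf sampling: a probability measure supported in `[-r,r]` is the pushforward of
the uniform distribution on `[0,1]` by a monotone function with values in `[-r,r]`. -/
lemma exists_quantile (r : ℝ) (hr : 0 ≤ r) (ρ : Measure ℝ) [IsProbabilityMeasure ρ]
    (hsupp : ρ (Set.Icc (-r) r)ᶜ = 0) :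
    ∃ Q : ℝ → ℝ, Monotone Q ∧ (∀ t, Q t ∈ Set.Icc (-r) r) ∧
      Measure.map Q (volume.restrict (Set.Icc (0:ℝ) 1)) = ρ := by
  set F := cdf ρ with hF
  have hF1 : ∀ y : ℝ, r ≤ y → F y = 1 := by
    intro y hy
    have h1 : (Set.Iic y)ᶜ ⊆ (Set.Icc (-r) r)ᶜ := by
      intro z hz
      simp only [Set.mem_compl_iff, Set.mem_Iic, not_le] at hz
      simp only [Set.mem_compl_iff, Set.mem_Icc, not_and, not_le]
      intro _; linarith
    have h2 : ρ (Set.Iic y)ᶜ = 0 := le_antisymm (le_trans (measure_mono h1) hsupp.le) zero_le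
    have h3 : ρ (Set.Iic y) = 1 :=
      (prob_compl_eq_zero_iff (μ := ρ) (measurableSet_Iic (a := y))).mp h2
    rw [cdf_eq_real, measureReal_def, h3]; simp
  have hF0 : ∀ y : ℝ, y < -r → F y = 0 := by
    intro y hy
    have h1 : Set.Iic y ⊆ (Set.Icc (-r) r)ᶜ := by
      intro z hz
      simp only [Set.mem_Iic] at hz
      simp only [Set.mem_compl_iff, Set.mem_Icc, not_and, not_le]
      intro h; linarith
    have h2 : ρ (Set.Iic y) = 0 := le_antisymm (le_trans (measure_mono h1) hsupp.le) zero_le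
    rw [cdf_eq_real, measureReal_def, h2]; simp
  set S : ℝ → Set ℝ := fun t => {y | min t 1 ≤ F y} ∩ Set.Ici (-r) with hS
  have hrS : ∀ t, r ∈ S t := by
    intro t
    refine ⟨?_, by simp only [Set.mem_Ici]; linarith⟩
    simp only [Set.mem_setOf_eq, hF1 r le_rfl]
    exact min_le_right _ _
  have hSne : ∀ t, (S t).Nonempty := fun t => ⟨r, hrS t⟩
  have hSbd : ∀ t, BddBelow (S t) := fun t => ⟨-r, fun y hy => hy.2⟩
  set Q : ℝ → ℝ := fun t => sInf (S t) with hQ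
  have hQmono : Monotone Q := by
    intro t t' htt'
    refine csInf_le_csInf (hSbd t) (hSne t') ?_
    intro y hy
    exact ⟨le_trans (min_le_min_right 1 htt') hy.1, hy.2⟩
  have hQmem : ∀ t, Q t ∈ Set.Icc (-r) r :=
    fun t => ⟨le_csInf (hSne t) (fun y hy => hy.2), csInf_le (hSbd t) (hrS t)⟩
  -- for t ∈ (0,1), the defining set simplifies and we get the Galois connection
  have hSeq : ∀ t ∈ Set.Ioo (0:ℝ) 1, S t = {y | t ≤ F y} := by
    intro t ht
    rw [hS]
    ext z
    simp only [Set.mem_inter_iff, Set.mem_setOf_eq, Set.mem_Ici, min_eq_left ht.2.le]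
    constructor
    · rintro ⟨h1, _⟩; exact h1
    · intro h1
      refine ⟨h1, ?_⟩
      by_contra hc
      push_neg at hc
      rw [hF0 z hc] at h1
      linarith [ht.1]
  have hgal : ∀ t ∈ Set.Ioo (0:ℝ) 1, ∀ y : ℝ, Q t ≤ y ↔ t ≤ F y := by
    intro t ht y
    have hmem : Q t ∈ S t := by
      -- S t is closed under passing to the infimum, by right continuity of F
      rw [hSeq t ht]
      have hev : ∀ᶠ z in 𝓝[>] (Q t), t ≤ F z := by
        filter_upwards [self_mem_nhdsWithin] with z hz
        obtain ⟨s, hs, hsz⟩ := exists_lt_of_csInf_lt (hSne t) hz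
        rw [hSeq t ht] at hs
        exact le_trans hs (F.mono hsz.le)
      have htd : Tendsto F (𝓝[>] (Q t)) (𝓝 (F (Q t))) :=
        (F.right_continuous (Q t)).tendsto.mono_left
          (nhdsWithin_mono _ Set.Ioi_subset_Ici_self)
      exact ge_of_tendsto htd hev
    constructor
    · intro hy
      rw [hSeq t ht] at hmem
      exact le_trans hmem (F.mono hy)
    · intro hy
      refine csInf_le (hSbd t) ?_
      rw [hSeq t ht]
      exact hy
  have hQmeas : Measurable Q := hQmono.measurable
  have hU : IsProbabilityMeasure (volume.restrict (Set.Icc (0:ℝ) 1)) :=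
    ⟨by simp [Real.volume_Icc]⟩
  have hM : IsProbabilityMeasure (Measure.map Q (volume.restrict (Set.Icc (0:ℝ) 1))) :=
    Measure.isProbabilityMeasure_map hQmeas.aemeasurable
  refine ⟨Q, hQmono, hQmem, ?_⟩
  refine MeasureTheory.Measure.ext_of_Iic _ _ (fun y => ?_)
  rw [Measure.map_apply hQmeas measurableSet_Iic,
    Measure.restrict_apply (hQmeas measurableSet_Iic)]
  set A := Q ⁻¹' Set.Iic y with hA
  have key : A ∩ Set.Ioo (0:ℝ) 1 = Set.Ioo (0:ℝ) 1 ∩ Set.Iic (F y) := by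
    ext t
    simp only [hA, Set.mem_inter_iff, Set.mem_preimage, Set.mem_Iic, Set.mem_Ioo]
    constructor
    · rintro ⟨h1, h2⟩
      exact ⟨h2, (hgal t h2 y).mp h1⟩
    · rintro ⟨h1, h2⟩
      exact ⟨(hgal t h1 y).mpr h2, h1⟩
  have hvol : volume (A ∩ Set.Icc (0:ℝ) 1) = volume (A ∩ Set.Ioo (0:ℝ) 1) := by
    apply le_antisymm
    · have hsub : A ∩ Set.Icc (0:ℝ) 1 ⊆ (A ∩ Set.Ioo (0:ℝ) 1) ∪ ({0} ∪ {1} : Set ℝ) := by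
        rintro t ⟨h1, h2, h3⟩
        rcases eq_or_lt_of_le h2 with h | h
        · exact Or.inr (Or.inl (by simp [← h]))
        rcases eq_or_lt_of_le h3 with h' | h'
        · exact Or.inr (Or.inr (by simp [h']))
        · exact Or.inl ⟨h1, h, h'⟩
      calc volume (A ∩ Set.Icc (0:ℝ) 1) ≤ volume ((A ∩ Set.Ioo (0:ℝ) 1) ∪ ({0} ∪ {1} : Set ℝ)) :=
            measure_mono hsub
        _ ≤ volume (A ∩ Set.Ioo (0:ℝ) 1) + volume ({0} ∪ {1} : Set ℝ) := measure_union_le _ _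
        _ = volume (A ∩ Set.Ioo (0:ℝ) 1) := by
            rw [show volume ({0} ∪ {1} : Set ℝ) = 0 from
              measure_union_null (measure_singleton 0) (measure_singleton 1), add_zero]
    · exact measure_mono (Set.inter_subset_inter_right _ Set.Ioo_subset_Icc_self)
  rw [hvol, key]
  have hFy0 : 0 ≤ F y := cdf_nonneg ρ y
  have hFy1 : F y ≤ 1 := cdf_le_one ρ y
  have : volume (Set.Ioo (0:ℝ) 1 ∩ Set.Iic (F y)) = ENNReal.ofReal (F y) := by
    rcases lt_or_ge (F y) 1 with h | h
    · have : Set.Ioo (0:ℝ) 1 ∩ Set.Iic (F y) = Set.Ioc 0 (F y) := by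
        ext t
        simp only [Set.mem_inter_iff, Set.mem_Ioo, Set.mem_Iic, Set.mem_Ioc]
        constructor
        · rintro ⟨⟨h1, _⟩, h3⟩; exact ⟨h1, h3⟩
        · rintro ⟨h1, h2⟩; exact ⟨⟨h1, lt_of_le_of_lt h2 h⟩, h2⟩
      rw [this, Real.volume_Ioc, sub_zero]
    · have hFy : F y = 1 := le_antisymm hFy1 h
      have : Set.Ioo (0:ℝ) 1 ∩ Set.Iic (F y) = Set.Ioo 0 1 := by
        rw [Set.inter_eq_left]
        intro t ht
        simp only [Set.mem_Iic, hFy]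
        exact ht.2.le
      rw [this, Real.volume_Ioo, hFy]; norm_num
  rw [this, ofReal_cdf]

/-- Theorem 5.4: a strict-rearrangement-invariant, convex, strongly continuous function
on the bounded Borel functions of a Polish space with a finite nonatomic Borel measure
is Lipschitz continuous on bounded sets (for the sup norm). -/
theorem stmt8 {X : Type*} [TopologicalSpace X] [PolishSpace X] [MeasurableSpace X]
    [BorelSpace X] (μ : Measure X) [IsFiniteMeasure μ]
    (hμ : Nonatomic μ) (hpos : 0 < μ Set.univ)
    (B : Set (X → ℝ)) (hB : B = {f : X → ℝ | Measurable f ∧ ∃ M : ℝ, ∀ x, |f x| ≤ M})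
    (p : (X → ℝ) → ℝ)
    (hconv : ConvexOn ℝ B p)
    (hrear : ∀ ξ ∈ B, ∀ η ∈ B, Measure.map ξ μ = Measure.map η μ → p ξ = p η)
    (hsc : StronglyContinuousOn μ B p) :
    ∀ R : ℝ, 0 < R → ∃ L : ℝ, 0 < L ∧ ∀ ξ ∈ B, ∀ η ∈ B,
      (∀ x, |ξ x| ≤ R) → (∀ x, |η x| ≤ R) →
      |p ξ - p η| ≤ L * ⨆ x, |ξ x - η x| := by
  -- basic setup
  have hXne : Nonempty X := by
    by_contra h
    rw [not_nonempty_iff] at h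
    rw [Set.univ_eq_empty_iff.2 h, measure_empty] at hpos
    exact lt_irrefl 0 hpos
  set c := μ Set.univ with hc
  have hc0 : c ≠ 0 := hpos.ne'
  have hcT : c ≠ ⊤ := measure_ne_top μ _
  set ν : Measure X := c⁻¹ • μ with hν
  have hνzero : ∀ s : Set X, ν s = 0 ↔ μ s = 0 := by
    intro s
    rw [hν, Measure.smul_apply, smul_eq_mul, mul_eq_zero]
    simp only [ENNReal.inv_eq_zero]
    exact ⟨fun h => h.resolve_left hcT, fun h => Or.inr h⟩
  haveI hνprob : IsProbabilityMeasure ν := by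
    constructor
    rw [hν, Measure.smul_apply, smul_eq_mul, ← hc, ENNReal.inv_mul_cancel hc0 hcT]
  have hμsing : ∀ x : X, μ {x} = 0 := by
    intro x
    by_contra h
    obtain ⟨t, hts, _, ht0, htlt⟩ := hμ {x} (measurableSet_singleton x) (pos_iff_ne_zero.2 h)
    rcases Set.subset_singleton_iff_eq.1 hts with rfl | rfl
    · rw [measure_empty] at ht0; exact lt_irrefl 0 ht0
    · exact lt_irrefl _ htlt
  haveI hνatoms : NullSingletonClass ν := ⟨fun x => (hνzero {x}).2 (hμsing x)⟩
  have hXunc : ¬Countable X := by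
    intro h
    have := Set.countable_univ.measure_zero ν
    rw [measure_univ] at this
    exact one_ne_zero this
  -- Borel isomorphism with ℝ and the uniform representation g
  have hRunc : ¬Countable ℝ := fun h => Cardinal.not_countable_real Set.countable_univ
  let e : X ≃ᵐ ℝ := PolishSpace.measurableEquivOfNotCountable hXunc hRunc
  set ρ₀ : Measure ℝ := Measure.map e ν with hρ₀
  haveI : IsProbabilityMeasure ρ₀ := Measure.isProbabilityMeasure_map e.measurable.aemeasurable
  haveI : NullSingletonClass ρ₀ := by
    constructor
    intro y
    rw [hρ₀, MeasurableEquiv.map_apply]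
    have : e ⁻¹' {y} = {e.symm y} := by
      ext z
      simp only [Set.mem_preimage, Set.mem_singleton_iff]
      exact ⟨fun h => by rw [← h, MeasurableEquiv.symm_apply_apply],
        fun h => by rw [h, MeasurableEquiv.apply_symm_apply]⟩
    rw [this]
    exact measure_singleton _
  set F₀ := cdf ρ₀ with hF₀
  set g : X → ℝ := fun x => F₀ (e x) with hg
  have hgmeas : Measurable g := F₀.mono.measurable.comp e.measurable
  have hgmap : Measure.map g ν = volume.restrict (Set.Icc (0:ℝ) 1) := by
    have : Measure.map g ν = Measure.map F₀ ρ₀ := by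
      rw [hρ₀, Measure.map_map F₀.mono.measurable e.measurable]
      rfl
    rw [this]
    exact map_cdf_eq_uniform ρ₀
  have hμν : μ = c • ν := by
    rw [hν, smul_smul, ENNReal.mul_inv_cancel hc0 hcT, one_smul]
  -- Boundedness above of p on balls
  have hbdd : ∀ r : ℝ, 0 ≤ r → ∃ M : ℝ, ∀ ξ ∈ B, (∀ x, |ξ x| ≤ r) → p ξ ≤ M := by
    intro r hr
    by_contra hcon
    push_neg at hcon
    have hch : ∀ n : ℕ, ∃ ξ, ξ ∈ B ∧ (∀ x, |ξ x| ≤ r) ∧ (n : ℝ) < p ξ := by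
      intro n
      obtain ⟨ξ, h1, h2, h3⟩ := hcon n
      exact ⟨ξ, h1, h2, h3⟩
    choose ξs hξB hξr hξp using hch
    have hξmeas : ∀ n, Measurable (ξs n) := by
      intro n
      have := hξB n
      rw [hB] at this
      exact this.1
    -- quantile rearrangements
    have hQch : ∀ n : ℕ, ∃ Q : ℝ → ℝ, Monotone Q ∧ (∀ t, Q t ∈ Set.Icc (-r) r) ∧
        Measure.map Q (volume.restrict (Set.Icc (0:ℝ) 1)) = Measure.map (ξs n) ν := by
      intro n
      haveI : IsProbabilityMeasure (Measure.map (ξs n) ν) :=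
        Measure.isProbabilityMeasure_map (hξmeas n).aemeasurable
      refine exists_quantile r hr _ ?_
      rw [Measure.map_apply (hξmeas n) (measurableSet_Icc.compl)]
      have : ξs n ⁻¹' (Set.Icc (-r) r)ᶜ = ∅ := by
        ext x
        simp only [Set.mem_preimage, Set.mem_compl_iff, Set.mem_Icc, Set.mem_empty_iff_false,
          iff_false, not_not]
        exact abs_le.1 (hξr n x)
      rw [this, measure_empty]
    choose Qs hQmono hQmem hQmap using hQch
    -- Helly selection
    obtain ⟨φ, hφ, D, hDc, hDconv⟩ := helly_selection r Qs hQmono hQmem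
    set ηs : ℕ → X → ℝ := fun n x => Qs n (g x) with hηs
    have hηmeas : ∀ n, Measurable (ηs n) := fun n => (hQmono n).measurable.comp hgmeas
    have hηB : ∀ n, ηs n ∈ B := by
      intro n
      rw [hB]
      exact ⟨hηmeas n, r, fun x => abs_le.2 ⟨(hQmem n (g x)).1, (hQmem n (g x)).2⟩⟩
    have hηmap : ∀ n, Measure.map (ηs n) ν = Measure.map (ξs n) ν := by
      intro n
      rw [hηs]
      have : Measure.map (fun x => Qs n (g x)) ν = Measure.map (Qs n) (Measure.map g ν) := by
        rw [Measure.map_map (hQmono n).measurable hgmeas]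
        rfl
      rw [this, hgmap, hQmap]
    have hpeq : ∀ n, p (ηs n) = p (ξs n) := by
      intro n
      refine hrear _ (hηB n) _ (hξB n) ?_
      have h1 : Measure.map (ηs n) μ = c • Measure.map (ηs n) ν := by
        rw [hμν, Measure.map_smul]
      have h2 : Measure.map (ξs n) μ = c • Measure.map (ξs n) ν := by
        rw [hμν, Measure.map_smul]
      rw [h1, h2, hηmap n]
    -- a.e. convergence of the subsequence
    have hae : ∀ᵐ x ∂μ, ∃ l : ℝ, Tendsto (fun k => ηs (φ k) x) atTop (𝓝 l) := by
      have hDm : MeasurableSet D := hDc.measurableSet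
      have hnull : μ (g ⁻¹' D) = 0 := by
        rw [← hνzero]
        have : ν (g ⁻¹' D) = Measure.map g ν D := (Measure.map_apply hgmeas hDm).symm
        rw [this, hgmap, Measure.restrict_apply hDm]
        exact measure_mono_null Set.inter_subset_left (hDc.measure_zero _)
      refine measure_mono_null ?_ hnull
      intro x hx
      simp only [Set.mem_compl_iff, Set.mem_setOf_eq] at hx ⊢
      by_contra hgx
      exact hx (hDconv (g x) hgx)
    obtain ⟨L, hL⟩ := hsc (fun k => ηs (φ k)) (fun k => hηB (φ k))
      ⟨r, fun k x => abs_le.2 ⟨(hQmem (φ k) (g x)).1, (hQmem (φ k) (g x)).2⟩⟩ hae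
    have htop : Tendsto (fun k => p (ηs (φ k))) atTop atTop := by
      refine tendsto_atTop_mono (fun k => ?_) tendsto_natCast_atTop_atTop
      rw [hpeq (φ k)]
      calc (k : ℝ) ≤ (φ k : ℝ) := Nat.cast_le.2 (hφ.le_apply)
        _ ≤ p (ξs (φ k)) := (hξp (φ k)).le
    exact not_tendsto_nhds_of_tendsto_atTop htop L hL
  -- zero function and lower bounds
  have h0B : (0 : X → ℝ) ∈ B := by
    rw [hB]
    exact ⟨measurable_const, 0, fun x => by simp⟩
  -- main construction
  intro R hR
  obtain ⟨M, hM⟩ := hbdd (4 * R) (by linarith)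
  have hM0 : p 0 ≤ M := hM 0 h0B (fun x => by simp; linarith)
  set m : ℝ := 2 * p 0 - M with hm
  have hlow : ∀ ξ ∈ B, (∀ x, |ξ x| ≤ 4 * R) → m ≤ p ξ := by
    intro ξ hξ hξb
    have hnB : (-ξ) ∈ B := by
      rw [hB] at hξ ⊢
      exact ⟨hξ.1.neg, 4 * R, fun x => by simp only [Pi.neg_apply, abs_neg]; exact hξb x⟩
    have hcomb : (0 : X → ℝ) = (1/2 : ℝ) • ξ + (1/2 : ℝ) • (-ξ) := by
      funext x
      simp only [Pi.add_apply, Pi.smul_apply, Pi.neg_apply, smul_eq_mul, Pi.zero_apply]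
      ring
    have := hconv.2 hξ hnB (by norm_num : (0:ℝ) ≤ 1/2) (by norm_num : (0:ℝ) ≤ 1/2) (by norm_num)
    rw [← hcomb] at this
    simp only [smul_eq_mul] at this
    have hn : p (-ξ) ≤ M := hM _ hnB (fun x => by simp only [Pi.neg_apply, abs_neg]; exact hξb x)
    rw [hm]
    linarith
  set L : ℝ := (M - m) / R + 1 with hLdef
  have hMm : 0 ≤ M - m := by rw [hm]; linarith
  have hLpos : 0 < L := by
    rw [hLdef]
    have : 0 ≤ (M - m) / R := div_nonneg hMm hR.le
    linarith
  refine ⟨L, hLpos, ?_⟩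
  -- the core one-sided estimate
  have key : ∀ ξ ∈ B, ∀ η ∈ B, (∀ x, |ξ x| ≤ R) → (∀ x, |η x| ≤ R) →
      p η - p ξ ≤ L * ⨆ x, |ξ x - η x| := by
    intro ξ hξ η hη hξb hηb
    set d : ℝ := ⨆ x, |ξ x - η x| with hd
    have hbddA : BddAbove (Set.range fun x => |ξ x - η x|) := by
      refine ⟨2 * R, ?_⟩
      rintro y ⟨x, rfl⟩
      calc |ξ x - η x| ≤ |ξ x| + |η x| := abs_sub _ _
        _ ≤ 2 * R := by linarith [hξb x, hηb x]
    have hdle : ∀ x, |ξ x - η x| ≤ d := fun x => le_ciSup hbddA x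
    have hd2R : d ≤ 2 * R := by
      refine ciSup_le (fun x => ?_)
      calc |ξ x - η x| ≤ |ξ x| + |η x| := abs_sub _ _
        _ ≤ 2 * R := by linarith [hξb x, hηb x]
    obtain ⟨x₀⟩ := hXne
    have hd0 : 0 ≤ d := le_trans (abs_nonneg _) (hdle x₀)
    rcases eq_or_lt_of_le hd0 with hdz | hdz
    · -- d = 0 : ξ = η
      have : ξ = η := by
        funext x
        have := hdle x
        rw [← hdz] at this
        have := le_antisymm this (abs_nonneg _)
        rwa [abs_eq_zero, sub_eq_zero] at this
      rw [this, ← hdz, mul_zero, sub_self]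
    · -- d > 0
      have hdR : 0 < d + R := by linarith
      set lam : ℝ := d / (d + R) with hlam
      have hlam0 : 0 ≤ lam := div_nonneg hd0 hdR.le
      have hlam1 : lam ≤ 1 := by
        rw [hlam, div_le_one hdR]
        linarith
      set ζ : X → ℝ := fun x => ξ x + ((d + R) / d) * (η x - ξ x) with hζ
      have hζb : ∀ x, |ζ x| ≤ 4 * R := by
        intro x
        have h1 : |ζ x| ≤ |ξ x| + ((d + R) / d) * |η x - ξ x| := by
          rw [hζ]
          calc |ξ x + ((d + R) / d) * (η x - ξ x)| ≤ |ξ x| + |((d + R) / d) * (η x - ξ x)| :=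
              abs_add_le _ _
            _ = |ξ x| + ((d + R) / d) * |η x - ξ x| := by
              rw [abs_mul, abs_of_nonneg (div_nonneg hdR.le hd0)]
        have h2 : ((d + R) / d) * |η x - ξ x| ≤ ((d + R) / d) * d := by
          refine mul_le_mul_of_nonneg_left ?_ (div_nonneg hdR.le hd0)
          rw [abs_sub_comm]
          exact hdle x
        have h3 : ((d + R) / d) * d = d + R := div_mul_cancel₀ _ hdz.ne'
        have := hξb x
        calc |ζ x| ≤ |ξ x| + ((d + R) / d) * d := by linarith
          _ = |ξ x| + (d + R) := by rw [h3]
          _ ≤ 4 * R := by linarith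
      have hζB : ζ ∈ B := by
        rw [hB] at hξ hη ⊢
        refine ⟨?_, 4 * R, hζb⟩
        exact hξ.1.add ((measurable_const.mul (hη.1.sub hξ.1)))
      have hcomb : η = lam • ζ + (1 - lam) • ξ := by
        funext x
        simp only [Pi.add_apply, Pi.smul_apply, smul_eq_mul, hζ, hlam]
        field_simp
        ring
      have hcv := hconv.2 hζB hξ hlam0 (by linarith : (0:ℝ) ≤ 1 - lam) (by ring)
      rw [← hcomb] at hcv
      simp only [smul_eq_mul] at hcv
      have hζM : p ζ ≤ M := hM ζ hζB hζb
      have hξm : m ≤ p ξ := hlow ξ hξ (fun x => le_trans (hξb x) (by linarith))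
      -- p η - p ξ ≤ lam * (p ζ - p ξ) ≤ lam * (M - m)
      have h4 : p η - p ξ ≤ lam * (M - m) := by nlinarith
      have h5 : lam * (M - m) ≤ (d / R) * (M - m) := by
        refine mul_le_mul_of_nonneg_right ?_ hMm
        rw [hlam, div_le_div_iff₀ hdR hR]
        nlinarith
      have h6 : (d / R) * (M - m) ≤ L * d := by
        have h7 : (M - m) / R ≤ L := by rw [hLdef]; linarith
        calc (d / R) * (M - m) = ((M - m) / R) * d := by ring
          _ ≤ L * d := mul_le_mul_of_nonneg_right h7 hd0
      exact le_trans h4 (le_trans h5 h6)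
  intro ξ hξ η hη hξb hηb
  rw [abs_sub_le_iff]
  constructor
  · have := key η hη ξ hξ hηb hξb
    have heq : (⨆ x, |η x - ξ x|) = ⨆ x, |ξ x - η x| := by
      congr 1
      funext x
      rw [abs_sub_comm]
    rwa [heq] at this
  · exact key ξ hξ η hη hξb hηb
end

section
/- Let X be a compact connected topological space and μ a finite Borel measure on X with μ(X) > 0 such that μ(U) > 0 for every nonempty open set U ⊆ X. Then for every continuous function ξ : X → ℝ there exists a continuous nonincreasing function ξ⋆ : [0, μ(X)] → ℝ that is equidistributed with ξ, i.e., the pushforward of Lebesgue measure on [0, μ(X)] under ξ⋆ equals the pushforward of μ under ξ. -/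
open MeasureTheory

/-- Auxiliary: existence of a continuous antitone map on `ℝ` pushing Lebesgue measure
restricted to `[0, M]` forward to a given finite measure `ν` on `ℝ` supported in `[a, b]`
with strictly increasing CDF there. -/
theorem stmt9_aux (ν : Measure ℝ) [IsFiniteMeasure ν] (a b : ℝ) (hab : a ≤ b)
    (hpos : 0 < ν Set.univ)
    (h0 : ∀ t : ℝ, t < a → ν (Set.Iic t) = 0)
    (hb : ∀ t : ℝ, b ≤ t → ν (Set.Iic t) = ν Set.univ)
    (hstrict : ∀ u t : ℝ, a ≤ u → u < t → t ≤ b → ν (Set.Iic u) < ν (Set.Iic t)) :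
    ∃ g' : ℝ → ℝ, Continuous g' ∧ Antitone g' ∧
      Measure.map g' (MeasureTheory.volume.restrict
        (Set.Icc (0 : ℝ) (ν Set.univ).toReal)) = ν := by
  have hfin : ν Set.univ ≠ ⊤ := measure_ne_top ν _
  have hνfin : ∀ s : Set ℝ, ν s ≠ ⊤ := fun s => measure_ne_top ν s
  set M : ℝ := (ν Set.univ).toReal with hMdef
  have hMpos : 0 < M := ENNReal.toReal_pos hpos.ne' hfin
  set F : ℝ → ℝ := fun t => (ν (Set.Iic t)).toReal with hFdef
  have hFmono : Monotone F := fun u t hut =>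
    ENNReal.toReal_mono (hνfin _) (measure_mono (Set.Iic_subset_Iic.mpr hut))
  have hFnn : ∀ t, 0 ≤ F t := fun t => ENNReal.toReal_nonneg
  have hFleM : ∀ t, F t ≤ M :=
    fun t => ENNReal.toReal_mono hfin (measure_mono (Set.subset_univ _))
  have hFb : ∀ t, b ≤ t → F t = M := by
    intro t hbt
    simp only [hFdef, hb t hbt, hMdef]
  have hFstrict : ∀ u t : ℝ, a ≤ u → u < t → t ≤ b → F u < F t := by
    intro u t hau hut htb
    exact (ENNReal.toReal_lt_toReal (hνfin _) (hνfin _)).mpr (hstrict u t hau hut htb)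
  -- right continuity, in the form we need
  have hrc : ∀ t s : ℝ, (∀ ε : ℝ, 0 < ε → s ≤ F (t + ε)) → s ≤ F t := by
    intro t s h
    rcases le_or_gt s 0 with hs | hs
    · exact hs.trans (hFnn t)
    have hiter : (⋂ n : ℕ, Set.Iic (t + ((n : ℝ) + 1)⁻¹)) = Set.Iic t := by
      ext x
      simp only [Set.mem_iInter, Set.mem_Iic]
      constructor
      · intro hx
        by_contra hxt
        push_neg at hxt
        obtain ⟨n, hn⟩ := exists_nat_one_div_lt (sub_pos.mpr hxt)
        have h1 := hx n
        rw [one_div] at hn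
        linarith
      · intro hx n
        have h2 : (0 : ℝ) < ((n : ℝ) + 1)⁻¹ := by positivity
        linarith
    have htend : Filter.Tendsto (fun n : ℕ => ν (Set.Iic (t + ((n : ℝ) + 1)⁻¹)))
        Filter.atTop (nhds (ν (Set.Iic t))) := by
      have h3 := tendsto_measure_iInter_atTop (μ := ν)
        (s := fun n : ℕ => Set.Iic (t + ((n : ℝ) + 1)⁻¹))
        (fun n => measurableSet_Iic.nullMeasurableSet)
        (fun m n hmn => Set.Iic_subset_Iic.mpr (by
          have hle : ((n : ℝ) + 1)⁻¹ ≤ ((m : ℝ) + 1)⁻¹ := by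
            apply inv_anti₀ (by positivity)
            have : (m : ℝ) ≤ (n : ℝ) := Nat.cast_le.mpr hmn
            linarith
          linarith))
        ⟨0, hνfin _⟩
      rwa [hiter] at h3
    have hbound : ∀ n : ℕ, ENNReal.ofReal s ≤ ν (Set.Iic (t + ((n : ℝ) + 1)⁻¹)) := by
      intro n
      have hsF := h _ (by positivity : (0 : ℝ) < ((n : ℝ) + 1)⁻¹)
      exact (ENNReal.ofReal_le_iff_le_toReal (hνfin _)).mpr hsF
    have hlim : ENNReal.ofReal s ≤ ν (Set.Iic t) :=
      ge_of_tendsto' htend hbound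
    exact (ENNReal.ofReal_le_iff_le_toReal (hνfin _)).mp hlim
  -- the quantile function
  set S : ℝ → Set ℝ := fun σ => {t | a ≤ t ∧ σ ≤ F t} with hSdef
  have hSb : ∀ σ : ℝ, σ ≤ M → b ∈ S σ := by
    intro σ hσ
    refine ⟨hab, ?_⟩
    rw [hFb b le_rfl]
    exact hσ
  have hSbdd : ∀ σ : ℝ, BddBelow (S σ) := fun σ => ⟨a, fun t ht => ht.1⟩
  set Q : ℝ → ℝ := fun σ => sInf (S σ) with hQdef
  have hQa : ∀ σ : ℝ, σ ≤ M → a ≤ Q σ := fun σ hσ =>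
    le_csInf ⟨b, hSb σ hσ⟩ (fun t ht => ht.1)
  have hQb : ∀ σ : ℝ, σ ≤ M → Q σ ≤ b := fun σ hσ => csInf_le (hSbdd σ) (hSb σ hσ)
  have hQmem : ∀ σ : ℝ, σ ≤ M → σ ≤ F (Q σ) := by
    intro σ hσ
    apply hrc
    intro ε hε
    obtain ⟨u, huS, hu⟩ := exists_lt_of_csInf_lt ⟨b, hSb σ hσ⟩
      (lt_add_of_pos_right (sInf (S σ)) hε)
    exact huS.2.trans (hFmono hu.le)
  have hgal : ∀ σ : ℝ, σ ≤ M → ∀ t : ℝ, a ≤ t → (Q σ ≤ t ↔ σ ≤ F t) := by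
    intro σ hσ t hat
    constructor
    · intro h
      exact (hQmem σ hσ).trans (hFmono h)
    · intro h
      exact csInf_le (hSbdd σ) ⟨hat, h⟩
  have hQmono : ∀ σ σ' : ℝ, σ ≤ σ' → σ' ≤ M → Q σ ≤ Q σ' := fun σ σ' h h' =>
    csInf_le_csInf (hSbdd σ) ⟨b, hSb σ' h'⟩ (fun t ht => ⟨ht.1, h.trans ht.2⟩)
  have hQ0 : Q 0 = a :=
    le_antisymm (csInf_le (hSbdd 0) ⟨le_rfl, hFnn a⟩) (hQa 0 hMpos.le)
  have hQM : Q M = b := by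
    refine le_antisymm (hQb M le_rfl) (le_csInf ⟨b, hSb M le_rfl⟩ ?_)
    intro t ht
    by_contra hlt
    push_neg at hlt
    have h4 : F t < M := by
      have h5 := hFstrict t b ht.1 hlt le_rfl
      rwa [hFb b le_rfl] at h5
    linarith [ht.2]
  have hQF : ∀ t : ℝ, a ≤ t → t ≤ b → Q (F t) = t := by
    intro t hat htb
    refine le_antisymm (csInf_le (hSbdd _) ⟨hat, le_rfl⟩)
      (le_csInf ⟨b, hSb _ (hFleM t)⟩ ?_)
    intro u hu
    by_contra hlt
    push_neg at hlt
    have h6 := hFstrict u t hu.1 hlt htb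
    linarith [hu.2]
  -- extend to a monotone surjective function on ℝ
  set cl : ℝ → ℝ := fun s => max 0 (min s M) with hcl
  have hcl_le : ∀ s, cl s ≤ M := fun s => max_le hMpos.le (min_le_right s M)
  have hcl_mono : Monotone cl := fun s s' h =>
    max_le_max le_rfl (min_le_min h le_rfl)
  set Qh : ℝ → ℝ := fun s => Q (cl s) + (min s 0 + max (s - M) 0) with hQh
  have hQhmono : Monotone Qh := by
    intro s s' h
    have h1 : Q (cl s) ≤ Q (cl s') := hQmono _ _ (hcl_mono h) (hcl_le s')
    have h2 : min s 0 ≤ min s' 0 := min_le_min h le_rfl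
    have h3 : max (s - M) 0 ≤ max (s' - M) 0 :=
      max_le_max (by linarith) le_rfl
    simp only [hQh]
    linarith
  have hQhIcc : ∀ s : ℝ, 0 ≤ s → s ≤ M → Qh s = Q s := by
    intro s h0' hM'
    have hcls : cl s = s := by
      simp only [hcl]
      rw [min_eq_left hM', max_eq_right h0']
    simp only [hQh, hcls, min_eq_right h0', max_eq_right (by linarith : s - M ≤ 0),
      add_zero]
  have hQhsurj : Function.Surjective Qh := by
    intro y
    rcases le_or_gt y a with hy | hy
    · refine ⟨y - a, ?_⟩
      have h1 : y - a ≤ 0 := by linarith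
      have hclv : cl (y - a) = 0 := by
        simp only [hcl]
        rw [min_eq_left (by linarith : y - a ≤ M), max_eq_left h1]
      simp only [hQh, hclv, hQ0, min_eq_left h1,
        max_eq_right (by linarith : y - a - M ≤ 0)]
      ring
    rcases le_or_gt y b with hy2 | hy2
    · exact ⟨F y, by rw [hQhIcc _ (hFnn y) (hFleM y), hQF y hy.le hy2]⟩
    · refine ⟨y - b + M, ?_⟩
      have h1 : 0 ≤ y - b := by linarith
      have hclv : cl (y - b + M) = M := by
        simp only [hcl]
        rw [min_eq_right (by linarith : M ≤ y - b + M),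
          max_eq_right hMpos.le]
      simp only [hQh, hclv, hQM,
        min_eq_right (by linarith : (0:ℝ) ≤ y - b + M),
        max_eq_left (by linarith : (0:ℝ) ≤ y - b + M - M)]
      ring
  have hQhcont : Continuous Qh := hQhmono.continuous_of_surjective hQhsurj
  -- the antitone rearrangement
  refine ⟨fun s => Qh (M - s), ?_, ?_, ?_⟩
  · exact hQhcont.comp (continuous_const.sub continuous_id)
  · intro s s' h
    exact hQhmono (by linarith)
  · have hg'meas : Measurable fun s => Qh (M - s) :=
      (hQhcont.comp (continuous_const.sub continuous_id)).measurable
    have hIccMeas : MeasurableSet (Set.Icc (0 : ℝ) M) := measurableSet_Icc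
    haveI : IsFiniteMeasure
        (Measure.map (fun s => Qh (M - s)) (volume.restrict (Set.Icc (0 : ℝ) M))) := by
      constructor
      rw [Measure.map_apply hg'meas MeasurableSet.univ]
      refine lt_of_le_of_lt (measure_mono (Set.subset_univ _)) ?_
      rw [Measure.restrict_apply_univ, Real.volume_Icc]
      exact ENNReal.ofReal_lt_top
    refine Measure.ext_of_Iic _ ν (fun t => ?_)
    rw [Measure.map_apply hg'meas measurableSet_Iic,
      Measure.restrict_apply' hIccMeas]
    rcases lt_or_ge t a with hta | hat
    · have hempty : (fun s => Qh (M - s)) ⁻¹' Set.Iic t ∩ Set.Icc 0 M = ∅ := by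
        rw [Set.eq_empty_iff_forall_notMem]
        rintro s ⟨h1, h2, h3⟩
        rw [Set.mem_preimage, Set.mem_Iic] at h1
        rw [hQhIcc (M - s) (by linarith) (by linarith)] at h1
        have := hQa (M - s) (by linarith)
        linarith
      rw [hempty, measure_empty, h0 t hta]
    · have hset : (fun s => Qh (M - s)) ⁻¹' Set.Iic t ∩ Set.Icc 0 M
          = Set.Icc (M - F t) M := by
        ext s
        simp only [Set.mem_inter_iff, Set.mem_preimage, Set.mem_Iic, Set.mem_Icc]
        constructor
        · rintro ⟨h1, h2, h3⟩
          rw [hQhIcc (M - s) (by linarith) (by linarith)] at h1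
          have h4 := (hgal (M - s) (by linarith) t hat).mp h1
          exact ⟨by linarith, h3⟩
        · rintro ⟨h1, h2⟩
          have h0' : 0 ≤ s := le_trans (by linarith [hFleM t]) h1
          refine ⟨?_, h0', h2⟩
          rw [hQhIcc (M - s) (by linarith) (by linarith)]
          exact (hgal (M - s) (by linarith) t hat).mpr (by linarith)
      rw [hset, Real.volume_Icc, show M - (M - F t) = F t by ring,
        ENNReal.ofReal_toReal (hνfin _)]

/-- Lemmas 5.5–5.7: on a compact connected space with a finite Borel measure that is
positive on nonempty open sets, every continuous `ξ : X → ℝ` has a continuous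
nonincreasing "decreasing rearrangement" `ξ⋆ : [0, μ(X)] → ℝ` equidistributed with `ξ`
(the pushforward of Lebesgue measure on `[0, μ(X)]` under `ξ⋆` equals the pushforward
of `μ` under `ξ`). -/
theorem stmt9 {X : Type*} [TopologicalSpace X] [CompactSpace X] [ConnectedSpace X]
    [MeasurableSpace X] [BorelSpace X] (μ : Measure X) [IsFiniteMeasure μ]
    (hpos : 0 < μ Set.univ)
    (hopen : ∀ U : Set X, IsOpen U → U.Nonempty → 0 < μ U)
    (ξ : X → ℝ) (hξ : Continuous ξ) :
    ∃ g : (Set.Icc (0 : ℝ) (μ Set.univ).toReal) → ℝ,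
      Continuous g ∧ Antitone g ∧
      Measure.map g (MeasureTheory.Measure.comap Subtype.val MeasureTheory.volume) =
        Measure.map ξ μ := by
  have hXne : Nonempty X := by
    by_contra h
    rw [not_nonempty_iff] at h
    rw [Set.univ_eq_empty_iff.mpr h, measure_empty] at hpos
    exact lt_irrefl 0 hpos
  have hK : IsCompact (Set.range ξ) := isCompact_range hξ
  have hKne : (Set.range ξ).Nonempty := Set.range_nonempty ξ
  set a := sInf (Set.range ξ) with hadef
  set b := sSup (Set.range ξ) with hbdef
  have ha_mem : a ∈ Set.range ξ := hK.sInf_mem hKne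
  have hb_mem : b ∈ Set.range ξ := hK.sSup_mem hKne
  have hbb : BddBelow (Set.range ξ) := hK.bddBelow
  have hba : BddAbove (Set.range ξ) := hK.bddAbove
  have hge : ∀ x, a ≤ ξ x := fun x => csInf_le hbb ⟨x, rfl⟩
  have hle : ∀ x, ξ x ≤ b := fun x => le_csSup hba ⟨x, rfl⟩
  have hab : a ≤ b := by
    obtain ⟨x, hx⟩ := ha_mem
    rw [← hx]
    exact hle x
  have hIcc : Set.Icc a b ⊆ Set.range ξ :=
    (isPreconnected_range hξ).Icc_subset ha_mem hb_mem
  set ν : Measure ℝ := Measure.map ξ μ with hνdef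
  haveI : IsFiniteMeasure ν := Measure.isFiniteMeasure_map μ ξ
  have hνap : ∀ s : Set ℝ, MeasurableSet s → ν s = μ (ξ ⁻¹' s) := fun s hs =>
    Measure.map_apply hξ.measurable hs
  have hνuniv : ν Set.univ = μ Set.univ := by
    rw [hνap _ MeasurableSet.univ, Set.preimage_univ]
  -- hypotheses of the auxiliary lemma
  have h0 : ∀ t : ℝ, t < a → ν (Set.Iic t) = 0 := by
    intro t hta
    rw [hνap _ measurableSet_Iic]
    convert measure_empty (μ := μ)
    ext x
    simp only [Set.mem_preimage, Set.mem_Iic, Set.mem_empty_iff_false, iff_false, not_le]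
    exact hta.trans_le (hge x)
  have hbfull : ∀ t : ℝ, b ≤ t → ν (Set.Iic t) = ν Set.univ := by
    intro t hbt
    rw [hνap _ measurableSet_Iic, hνuniv]
    congr 1
    ext x
    simp only [Set.mem_preimage, Set.mem_Iic, Set.mem_univ, iff_true]
    exact (hle x).trans hbt
  have hstrict : ∀ u t : ℝ, a ≤ u → u < t → t ≤ b → ν (Set.Iic u) < ν (Set.Iic t) := by
    intro u t hau hut htb
    have hoo : 0 < μ (ξ ⁻¹' Set.Ioo u t) := by
      apply hopen _ (isOpen_Ioo.preimage hξ)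
      have hm : (u + t) / 2 ∈ Set.Icc a b := ⟨by linarith, by linarith⟩
      obtain ⟨x, hx⟩ := hIcc hm
      exact ⟨x, by rw [Set.mem_preimage, hx]; constructor <;> [linarith; linarith]⟩
    have hsub : Set.Iic u ∪ Set.Ioo u t ⊆ Set.Iic t := by
      rintro x (hx | hx)
      · exact le_trans (Set.mem_Iic.mp hx) hut.le
      · exact le_of_lt hx.2
    have hdisj : Disjoint (Set.Iic u) (Set.Ioo u t) := by
      rw [Set.disjoint_left]
      intro x hx hx'
      exact absurd hx' (by simp only [Set.mem_Ioo, not_and, not_lt]; intro h; linarith [Set.mem_Iic.mp hx])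
    have hle' : ν (Set.Iic u) + ν (Set.Ioo u t) ≤ ν (Set.Iic t) := by
      rw [← measure_union hdisj measurableSet_Ioo]
      exact measure_mono hsub
    have hpos' : ν (Set.Ioo u t) ≠ 0 := by
      rw [hνap _ measurableSet_Ioo]
      exact hoo.ne'
    calc ν (Set.Iic u) < ν (Set.Iic u) + ν (Set.Ioo u t) :=
          ENNReal.lt_add_right (measure_ne_top ν _) hpos'
      _ ≤ ν (Set.Iic t) := hle'
  have hνpos : 0 < ν Set.univ := by rw [hνuniv]; exact hpos
  obtain ⟨g', hg'cont, hg'anti, hg'map⟩ := stmt9_aux ν a b hab hνpos h0 hbfull hstrict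
  have hMM : (ν Set.univ).toReal = (μ Set.univ).toReal := by rw [hνuniv]
  refine ⟨fun x => g' x.val, ?_, ?_, ?_⟩
  · exact hg'cont.comp continuous_subtype_val
  · intro x y hxy
    exact hg'anti hxy
  · have hIccMeas : MeasurableSet (Set.Icc (0 : ℝ) (μ Set.univ).toReal) := measurableSet_Icc
    have hemb : MeasurableEmbedding
        (Subtype.val : Set.Icc (0 : ℝ) (μ Set.univ).toReal → ℝ) :=
      MeasurableEmbedding.subtype_coe hIccMeas
    calc Measure.map (fun x : Set.Icc (0 : ℝ) (μ Set.univ).toReal => g' x.val)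
          (Measure.comap Subtype.val volume)
        = Measure.map g' (Measure.map Subtype.val (Measure.comap Subtype.val volume)) := by
          rw [Measure.map_map hg'cont.measurable hemb.measurable]
          rfl
      _ = Measure.map g' (volume.restrict (Set.Icc (0 : ℝ) (μ Set.univ).toReal)) := by
          rw [hemb.map_comap, Subtype.range_coe]
      _ = Measure.map ξ μ := by rw [← hMM, hg'map, hνdef]
end

section
/- Let (X, μ) be a finite nonatomic measure space, let φ₀ ∈ L¹(X, μ) be bounded below, and let ψ₀ ∈ L^∞(X, μ). Suppose φ, φ' ∈ L¹(X, μ) are each equidistributed with φ₀ and ψ, ψ' ∈ L^∞(X, μ) are each equidistributed with ψ₀, and suppose φ is similarly ordered with ψ and φ' is similarly ordered with ψ'. Then ∫_X φ ψ dμ = ∫_X φ' ψ' dμ. -/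
open MeasureTheory Set

/-- Two functions are similarly ordered if `(φ(x) − φ(y))(ψ(x) − ψ(y)) ≥ 0` for all
`x, y`. -/
def SimilarlyOrdered {X : Type*} (φ ψ : X → ℝ) : Prop :=
  ∀ x y, 0 ≤ (φ x - φ y) * (ψ x - ψ y)

lemma comonotone_inter {X : Type*} [MeasurableSpace X] (μ : Measure X)
    {φ ψ : X → ℝ} (hso : SimilarlyOrdered φ ψ) (a b : ℝ) :
    μ ({x | φ x ≤ a} ∩ {x | ψ x ≤ b})
      = min (μ {x | φ x ≤ a}) (μ {x | ψ x ≤ b}) := by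
  set A := {x | φ x ≤ a} with hA
  set B := {x | ψ x ≤ b} with hB
  have h : A ⊆ B ∨ B ⊆ A := by
    by_contra h
    rw [not_or, Set.not_subset, Set.not_subset] at h
    obtain ⟨⟨x, hxA, hxB⟩, ⟨y, hyB, hyA⟩⟩ := h
    simp only [hA, hB, Set.mem_setOf_eq, not_le] at hxA hxB hyA hyB
    nlinarith [hso x y]
  rcases h with h | h
  · rw [Set.inter_eq_left.mpr h, min_eq_left (measure_mono h)]
  · rw [Set.inter_eq_right.mpr h, min_eq_right (measure_mono h)]

lemma isCountablySpanning_range_Iic : IsCountablySpanning (Set.range (Iic : ℝ → Set ℝ)) := by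
  refine ⟨fun n => Iic (n : ℝ), fun n => ⟨_, rfl⟩, ?_⟩
  ext x
  simp only [Set.mem_iUnion, Set.mem_Iic, Set.mem_univ, iff_true]
  obtain ⟨n, hn⟩ := exists_nat_ge x
  exact ⟨n, hn⟩

lemma prod_measurableSpace_eq :
    (inferInstance : MeasurableSpace (ℝ × ℝ)) =
      MeasurableSpace.generateFrom
        (Set.image2 (· ×ˢ ·) (Set.range (Iic : ℝ → Set ℝ)) (Set.range (Iic : ℝ → Set ℝ))) := by
  have h : (inferInstance : MeasurableSpace ℝ) =
      MeasurableSpace.generateFrom (Set.range (Iic : ℝ → Set ℝ)) := by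
    rw [BorelSpace.measurable_eq (α := ℝ)]
    exact borel_eq_generateFrom_Iic ℝ
  conv_lhs => rw [show (inferInstance : MeasurableSpace (ℝ × ℝ)) =
    Prod.instMeasurableSpace from rfl]
  rw [show (Prod.instMeasurableSpace : MeasurableSpace (ℝ × ℝ)) =
    MeasurableSpace.prod inferInstance inferInstance from rfl]
  conv_lhs => rw [h]
  exact generateFrom_prod_eq isCountablySpanning_range_Iic isCountablySpanning_range_Iic

lemma joint_eq {X : Type*} [MeasurableSpace X] (μ : Measure X) [IsFiniteMeasure μ]
    {φ ψ φ' ψ' : X → ℝ} (hφ : Measurable φ) (hψ : Measurable ψ)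
    (hφ' : Measurable φ') (hψ' : Measurable ψ')
    (hφd : Measure.map φ μ = Measure.map φ' μ)
    (hψd : Measure.map ψ μ = Measure.map ψ' μ)
    (hso : SimilarlyOrdered φ ψ) (hso' : SimilarlyOrdered φ' ψ') :
    Measure.map (fun x => (φ x, ψ x)) μ = Measure.map (fun x => (φ' x, ψ' x)) μ := by
  have hpair : Measurable fun x => (φ x, ψ x) := hφ.prodMk hψ
  have hpair' : Measurable fun x => (φ' x, ψ' x) := hφ'.prodMk hψ'
  refine ext_of_generate_finite _ prod_measurableSpace_eq ?_ ?_ ?_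
  · rintro s ⟨_, ⟨a, rfl⟩, _, ⟨b, rfl⟩, rfl⟩ t ⟨_, ⟨a', rfl⟩, _, ⟨b', rfl⟩, rfl⟩ -
    exact ⟨_, ⟨min a a', rfl⟩, _, ⟨min b b', rfl⟩, by
      simp only [Set.prod_inter_prod, Set.Iic_inter_Iic]⟩
  · rintro s ⟨_, ⟨a, rfl⟩, _, ⟨b, rfl⟩, rfl⟩
    have hm : MeasurableSet ((Iic a : Set ℝ) ×ˢ (Iic b : Set ℝ)) :=
      measurableSet_Iic.prod measurableSet_Iic
    rw [Measure.map_apply hpair hm, Measure.map_apply hpair' hm]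
    have h1 : (fun x => (φ x, ψ x)) ⁻¹' ((Iic a) ×ˢ (Iic b)) =
        {x | φ x ≤ a} ∩ {x | ψ x ≤ b} := rfl
    have h2 : (fun x => (φ' x, ψ' x)) ⁻¹' ((Iic a) ×ˢ (Iic b)) =
        {x | φ' x ≤ a} ∩ {x | ψ' x ≤ b} := rfl
    rw [h1, h2, comonotone_inter μ hso, comonotone_inter μ hso']
    have e1 : μ {x | φ x ≤ a} = μ {x | φ' x ≤ a} := by
      have h3 : (Measure.map φ μ) (Iic a) = (Measure.map φ' μ) (Iic a) := by rw [hφd]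
      rw [Measure.map_apply hφ measurableSet_Iic,
        Measure.map_apply hφ' measurableSet_Iic] at h3
      exact h3
    have e2 : μ {x | ψ x ≤ b} = μ {x | ψ' x ≤ b} := by
      have h3 : (Measure.map ψ μ) (Iic b) = (Measure.map ψ' μ) (Iic b) := by rw [hψd]
      rw [Measure.map_apply hψ measurableSet_Iic,
        Measure.map_apply hψ' measurableSet_Iic] at h3
      exact h3
    rw [e1, e2]
  · rw [Measure.map_apply hpair MeasurableSet.univ,
      Measure.map_apply hpair' MeasurableSet.univ, Set.preimage_univ, Set.preimage_univ]

/-- Lemma 7.2(c): `∫ φ ψ` is independent of the choice of `φ ∼ φ₀` and `ψ ∼ ψ₀`, as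
long as `φ, ψ` are similarly ordered. -/
theorem stmt12 {X : Type*} [MeasurableSpace X] (μ : Measure X) [IsFiniteMeasure μ]
    (hμ : Nonatomic μ)
    (φ₀ : X → ℝ) (hφm : Measurable φ₀) (hφi : Integrable φ₀ μ)
    (c : ℝ) (hφbdd : ∀ x, c ≤ φ₀ x)
    (ψ₀ : X → ℝ) (hψm : Measurable ψ₀) (C : ℝ) (hψb : ∀ x, |ψ₀ x| ≤ C)
    (φ φ' : X → ℝ) (hφ : Measurable φ) (hφ' : Measurable φ')
    (hφd : Measure.map φ μ = Measure.map φ₀ μ)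
    (hφ'd : Measure.map φ' μ = Measure.map φ₀ μ)
    (ψ ψ' : X → ℝ) (hψ : Measurable ψ) (hψ' : Measurable ψ')
    (hψd : Measure.map ψ μ = Measure.map ψ₀ μ)
    (hψ'd : Measure.map ψ' μ = Measure.map ψ₀ μ)
    (hso : SimilarlyOrdered φ ψ) (hso' : SimilarlyOrdered φ' ψ') :
    ∫ x, φ x * ψ x ∂μ = ∫ x, φ' x * ψ' x ∂μ := by
  have hjoint : Measure.map (fun x => (φ x, ψ x)) μ = Measure.map (fun x => (φ' x, ψ' x)) μ :=
    joint_eq μ hφ hψ hφ' hψ' (hφd.trans hφ'd.symm) (hψd.trans hψ'd.symm) hso hso'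
  have hg : Measurable fun p : ℝ × ℝ => p.1 * p.2 := measurable_fst.mul measurable_snd
  calc ∫ x, φ x * ψ x ∂μ
      = ∫ p : ℝ × ℝ, p.1 * p.2 ∂(Measure.map (fun x => (φ x, ψ x)) μ) := by
        rw [integral_map (hφ.prodMk hψ).aemeasurable hg.aestronglyMeasurable]
    _ = ∫ p : ℝ × ℝ, p.1 * p.2 ∂(Measure.map (fun x => (φ' x, ψ' x)) μ) := by rw [hjoint]
    _ = ∫ x, φ' x * ψ' x ∂μ := by
        rw [integral_map (hφ'.prodMk hψ').aemeasurable hg.aestronglyMeasurable]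
end

section
/- Let n ≥ 2. There exists a function t from the space of real quadratic forms on ℝ^{2n} to ℝ such that: (i) t(Q ∘ g) = t(Q) for every quadratic form Q on ℝ^{2n} and every matrix g in the symplectic group Sp(2n, ℝ) = { g ∈ GL(2n, ℝ) : gᵀ J g = J }, where J is the standard symplectic matrix and Q ∘ g denotes the quadratic form x ↦ Q(g x); and (ii) t is not invariant under the special linear group: there exist a quadratic form Q₀ on ℝ^{2n} and a matrix h ∈ SL(2n, ℝ) with t(Q₀ ∘ h) ≠ t(Q₀). -/
open Matrix

section aux
variable {n : ℕ}

lemma trace_fromBlocks' (A B C D : Matrix (Fin n) (Fin n) ℝ) :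
    trace (fromBlocks A B C D) = trace A + trace D := by
  simp [Matrix.trace, Matrix.diag, Fintype.sum_sum_type]

end aux

/-- Theorem 1.5 (linear-algebra core, Section 8): for `n ≥ 2` there is a function `t`
on quadratic forms on `ℝ^{2n}` (coordinates indexed by `Fin n ⊕ Fin n`) that is
invariant under composition with symplectic matrices (`gᵀ J g = J`, where
`J = [[0, I], [−I, 0]]`) but not under composition with all matrices of determinant
one. -/
theorem stmt15 (n : ℕ) (hn : 2 ≤ n) :
    ∃ t : QuadraticForm ℝ ((Fin n ⊕ Fin n) → ℝ) → ℝ,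
      (∀ (Q : QuadraticForm ℝ ((Fin n ⊕ Fin n) → ℝ))
          (g : Matrix (Fin n ⊕ Fin n) (Fin n ⊕ Fin n) ℝ),
          gᵀ * (Matrix.fromBlocks 0 1 (-1) 0) * g = Matrix.fromBlocks 0 1 (-1) 0 →
          t (Q.comp (Matrix.toLin' g)) = t Q) ∧
      (∃ (Q₀ : QuadraticForm ℝ ((Fin n ⊕ Fin n) → ℝ))
          (h : Matrix (Fin n ⊕ Fin n) (Fin n ⊕ Fin n) ℝ),
          h.det = 1 ∧ t (Q₀.comp (Matrix.toLin' h)) ≠ t Q₀) := by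
  classical
  haveI : NeZero n := ⟨by omega⟩
  set J : Matrix (Fin n ⊕ Fin n) (Fin n ⊕ Fin n) ℝ := fromBlocks 0 1 (-1) 0 with hJ
  set Jinv : Matrix (Fin n ⊕ Fin n) (Fin n ⊕ Fin n) ℝ := fromBlocks 0 (-1) 1 0 with hJinv
  have hJJ : Jinv * J = 1 := by
    simp [hJ, hJinv, Matrix.fromBlocks_multiply, ← Matrix.fromBlocks_one]
  have hJJ' : J * Jinv = 1 := by
    simp [hJ, hJinv, Matrix.fromBlocks_multiply, ← Matrix.fromBlocks_one]
  -- the matrix of a quadratic form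
  set Mat : QuadraticForm ℝ ((Fin n ⊕ Fin n) → ℝ) → Matrix (Fin n ⊕ Fin n) (Fin n ⊕ Fin n) ℝ :=
    fun Q => LinearMap.toMatrix₂' ℝ Q.polarBilin with hMat
  have hMatComp : ∀ (Q : QuadraticForm ℝ ((Fin n ⊕ Fin n) → ℝ))
      (g : Matrix (Fin n ⊕ Fin n) (Fin n ⊕ Fin n) ℝ),
      Mat (Q.comp (Matrix.toLin' g)) = gᵀ * Mat Q * g := by
    intro Q g
    simp only [hMat]
    simp only [QuadraticMap.polarBilin_comp, LinearMap.toMatrix₂'_compl₁₂,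
      LinearMap.toMatrix'_toLin']
  refine ⟨fun Q => trace ((Jinv * Mat Q) ^ 2), ?_, ?_⟩
  · intro Q g hg
    have hginv : Invertible g := by
      apply invertibleOfLeftInverse g (Jinv * gᵀ * J)
      calc Jinv * gᵀ * J * g = Jinv * (gᵀ * J * g) := by
            rw [Matrix.mul_assoc Jinv gᵀ J, Matrix.mul_assoc Jinv (gᵀ * J) g]
        _ = 1 := by rw [hg, hJJ]
    have h1 : gᵀ * J = J * ⅟g := by
      calc gᵀ * J = gᵀ * J * g * ⅟g := by
            rw [Matrix.mul_assoc (gᵀ * J) g, mul_invOf_self, Matrix.mul_one]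
        _ = J * ⅟g := by rw [hg]
    have hgt : gᵀ = J * ⅟g * Jinv := by
      calc gᵀ = gᵀ * J * Jinv := by rw [Matrix.mul_assoc, hJJ', Matrix.mul_one]
        _ = J * ⅟g * Jinv := by rw [h1]
    show trace ((Jinv * Mat (Q.comp (Matrix.toLin' g))) ^ 2) = trace ((Jinv * Mat Q) ^ 2)
    rw [hMatComp, hgt]
    have e1 : Jinv * (J * ⅟g * Jinv * Mat Q * g) = ⅟g * (Jinv * Mat Q) * g := by
      simp only [Matrix.mul_assoc]
      rw [← Matrix.mul_assoc Jinv J, hJJ, Matrix.one_mul]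
    rw [e1]
    set X := Jinv * Mat Q with hX
    have e2 : (⅟g * X * g) ^ 2 = ⅟g * X ^ 2 * g := by
      rw [sq, sq]
      calc ⅟g * X * g * (⅟g * X * g) = ⅟g * (X * (g * (⅟g * (X * g)))) := by
            simp only [Matrix.mul_assoc]
        _ = ⅟g * (X * (X * g)) := by rw [mul_invOf_cancel_left]
        _ = ⅟g * (X * X) * g := by simp only [Matrix.mul_assoc]
    rw [e2, Matrix.mul_assoc, Matrix.trace_mul_comm, Matrix.mul_assoc, mul_invOf_self,
      Matrix.mul_one]
  · -- counterexample
    have h01 : (0 : Fin n) ≠ 1 := by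
      intro hcontra
      have h2 := congrArg Fin.val hcontra
      rw [Fin.val_zero, Fin.val_one', Nat.mod_eq_of_lt (by omega : 1 < n)] at h2
      omega
    set E : Matrix (Fin n) (Fin n) ℝ := single 0 0 1 with hE
    set A : Matrix (Fin n ⊕ Fin n) (Fin n ⊕ Fin n) ℝ := fromBlocks 0 E E 0 with hA
    set B : ((Fin n ⊕ Fin n) → ℝ) →ₗ[ℝ] ((Fin n ⊕ Fin n) → ℝ) →ₗ[ℝ] ℝ :=
      Matrix.toLinearMap₂' ℝ A with hB
    set Q₀ : QuadraticForm ℝ ((Fin n ⊕ Fin n) → ℝ) :=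
      LinearMap.BilinMap.toQuadraticMap B with hQ₀
    have hEt : Eᵀ = E := by
      ext i j
      simp [hE, Matrix.single, and_comm]
    have hAt : Aᵀ = A := by
      rw [hA, Matrix.fromBlocks_transpose, hEt]
      simp
    have hMatQ₀ : Mat Q₀ = (2 : ℝ) • A := by
      simp only [hMat, hQ₀]
      rw [LinearMap.BilinMap.polarBilin_toQuadraticMap, map_add]
      have e1 : LinearMap.toMatrix₂' ℝ B = A := by
        rw [hB]; exact LinearMap.toMatrix'_toLinearMap₂' (R := ℝ) (S₁ := ℝ) (S₂ := ℝ) A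
      have e2 : LinearMap.toMatrix₂' ℝ (LinearMap.flip B) = Aᵀ := by
        ext i j
        rw [LinearMap.toMatrix₂'_apply, LinearMap.flip_apply, Matrix.transpose_apply,
          ← LinearMap.toMatrix₂'_apply (R := ℝ), e1]
      rw [e1, e2, hAt, two_smul]
    set V : Matrix (Fin n) (Fin n) ℝ := diagonal (fun i => if i = 0 then 2 else 1) with hV
    set W : Matrix (Fin n) (Fin n) ℝ := diagonal (fun i => if i = 1 then 2⁻¹ else 1) with hW
    set h : Matrix (Fin n ⊕ Fin n) (Fin n ⊕ Fin n) ℝ := fromBlocks V 0 0 W with hh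
    have hdet : h.det = 1 := by
      rw [hh, Matrix.det_fromBlocks_zero₂₁, hV, hW, Matrix.det_diagonal, Matrix.det_diagonal,
        Finset.prod_ite_eq' Finset.univ (0 : Fin n), Finset.prod_ite_eq' Finset.univ (1 : Fin n)]
      norm_num
    refine ⟨Q₀, h, hdet, ?_⟩
    have hEE : E * E = E := by rw [hE]; simp
    have hVE : V * E = (2 : ℝ) • E := by
      ext i j
      rw [hV, Matrix.diagonal_mul]
      by_cases hi : i = 0 <;>
        simp [hE, Matrix.single, hi, eq_comm]
    have hEW : E * W = E := by
      ext i j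
      rw [hW, Matrix.mul_diagonal]
      by_cases hj : j = 1
      · simp [hE, Matrix.single, hj, h01, eq_comm]
      · simp [hE, Matrix.single, hj]
    have hWE : W * E = E := by
      ext i j
      rw [hW, Matrix.diagonal_mul]
      by_cases hi : i = 1
      · simp [hE, Matrix.single, hi, h01, eq_comm]
      · simp [hE, Matrix.single, hi]
    have hEV : E * V = (2 : ℝ) • E := by
      ext i j
      rw [hV, Matrix.mul_diagonal]
      by_cases hj : j = 0 <;>
        simp [hE, Matrix.single, hj, eq_comm, mul_comm]
    have key : ∀ c : ℝ, trace ((Jinv * fromBlocks 0 (c • E) (c • E) 0) ^ 2) = 2 * c ^ 2 := by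
      intro c
      have h1 : Jinv * fromBlocks 0 (c • E) (c • E) 0
          = fromBlocks (-(c • E)) 0 0 (c • E) := by
        rw [hJinv, Matrix.fromBlocks_multiply]
        simp
      rw [h1, sq, Matrix.fromBlocks_multiply]
      simp only [Matrix.mul_zero, Matrix.zero_mul, add_zero, zero_add, Matrix.neg_mul,
        Matrix.mul_neg, neg_neg]
      have h2 : (c • E) * (c • E) = (c ^ 2) • E := by
        rw [smul_mul_assoc, mul_smul_comm, hEE, smul_smul, sq]
      rw [h2, trace_fromBlocks', Matrix.trace_smul, hE, Matrix.trace_single_eq_same,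
        smul_eq_mul]
      ring
    have hA2 : (2 : ℝ) • A = fromBlocks 0 ((2 : ℝ) • E) ((2 : ℝ) • E) 0 := by
      rw [hA, Matrix.fromBlocks_smul]
      simp
    have ht0 : trace ((Jinv * Mat Q₀) ^ 2) = 8 := by
      rw [hMatQ₀, hA2, key]
      norm_num
    have htc : trace ((Jinv * Mat (Q₀.comp (Matrix.toLin' h))) ^ 2) = 32 := by
      rw [hMatComp, hMatQ₀]
      have hhT : hᵀ = h := by
        rw [hh, Matrix.fromBlocks_transpose, hV, hW]
        simp [Matrix.diagonal_transpose]
      have hVEW : V * ((2 : ℝ) • E) * W = (4 : ℝ) • E := by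
        rw [Matrix.mul_smul, hVE, Matrix.smul_mul, Matrix.smul_mul, hEW, smul_smul]
        norm_num
      have hWEV : W * ((2 : ℝ) • E) * V = (4 : ℝ) • E := by
        rw [Matrix.mul_smul, hWE, Matrix.smul_mul, hEV, smul_smul]
        norm_num
      have hM : hᵀ * ((2 : ℝ) • A) * h = fromBlocks 0 ((4 : ℝ) • E) ((4 : ℝ) • E) 0 := by
        rw [hhT, hA2, hh, Matrix.fromBlocks_multiply, Matrix.fromBlocks_multiply]
        simp only [Matrix.mul_zero, Matrix.zero_mul, add_zero, zero_add, Matrix.mul_one,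
          Matrix.one_mul]
        rw [hVEW, hWEV]
      rw [hM, key]
      norm_num
    show trace ((Jinv * Mat (Q₀.comp (Matrix.toLin' h))) ^ 2) ≠ trace ((Jinv * Mat Q₀) ^ 2)
    rw [ht0, htc]
    norm_num
end
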